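/- arXiv:1603.08883 — 7 statements merged into one kernel-verified Lean document; each statement's English description precedes it below -/
import Mathlib

section
/- Let G be a finite simple forest (acyclic simple graph) on N vertices and let C ≥ 1 be an integer. Then there exists a C-dismantling set S of G with (C+1)·|S| ≤ N. -/
namespace ForestDismantleAux

open SimpleGraph Set

variable {V : Type*}

/-- The connected component of `x` inside the induced subgraph on `W`, as a set in `V`. -/
def cc (G : SimpleGraph V) (W : Set V) (x : V) : Set V :=
  {y | ∃ (hx : x ∈ W) (hy : y ∈ W), (G.induce W).Reachable ⟨x, hx⟩ ⟨y, hy⟩}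

lemma mem_cc_self (G : SimpleGraph V) {W : Set V} {x : V} (hx : x ∈ W) : x ∈ cc G W x :=
  ⟨hx, hx, Reachable.refl _⟩

lemma cc_eq_of_mem {G : SimpleGraph V} {W : Set V} {x y : V} (h : y ∈ cc G W x) :
    cc G W y = cc G W x := by
  obtain ⟨hx, hy, hr⟩ := h
  ext z
  constructor
  · rintro ⟨h1, hz, hr2⟩; exact ⟨hx, hz, hr.trans hr2⟩
  · rintro ⟨h1, hz, hr2⟩; exact ⟨hy, hz, hr.symm.trans hr2⟩

lemma adj_mem_cc {G : SimpleGraph V} {W : Set V} {x y z : V} (h : y ∈ cc G W x)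
    (hz : z ∈ W) (hadj : G.Adj y z) : z ∈ cc G W x := by
  obtain ⟨hx, hy, hr⟩ := h
  exact ⟨hx, hz, hr.trans (SimpleGraph.Adj.reachable
    (show (G.induce W).Adj ⟨y, hy⟩ ⟨z, hz⟩ from hadj))⟩

lemma walk_closed {G : SimpleGraph V} {W D : Set V}
    (hcl : ∀ a b, a ∈ D → b ∈ W → G.Adj a b → b ∈ D) :
    ∀ {a b : ↥W} (_ : (G.induce W).Walk a b), ↑a ∈ D → ↑b ∈ D := by
  intro a b p
  induction p with
  | nil => exact id
  | @cons u c b h q ih =>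
    intro ha
    exact ih (hcl _ _ ha c.2 (show G.Adj ↑u ↑c from h))

lemma cc_subset_of_closed {G : SimpleGraph V} {W D : Set V} {x : V} (hx : x ∈ D)
    (hcl : ∀ a b, a ∈ D → b ∈ W → G.Adj a b → b ∈ D) : cc G W x ⊆ D := by
  rintro y ⟨hxW, hyW, hr⟩
  obtain ⟨p⟩ := hr
  exact walk_closed hcl p hx

/-- the projection homomorphism from an induced subgraph. -/
def vhom (G : SimpleGraph V) (W : Set V) : G.induce W →g G :=
  ⟨Subtype.val, fun h => h⟩

lemma cc_mono {G : SimpleGraph V} {W W' : Set V} (h : W ⊆ W') (x : V) :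
    cc G W x ⊆ cc G W' x := by
  rintro y ⟨hx, hy, hr⟩
  exact ⟨h hx, h hy, hr.map (G.induceHomOfLE h).toHom⟩

lemma reachable_of_mem_cc {G : SimpleGraph V} {W : Set V} {x y : V} (h : y ∈ cc G W x) :
    G.Reachable x y := by
  obtain ⟨hx, hy, hr⟩ := h
  exact hr.map (vhom G W)

lemma mem_cc_univ {G : SimpleGraph V} {x y : V} : y ∈ cc G Set.univ x ↔ G.Reachable x y := by
  constructor
  · exact reachable_of_mem_cc
  · intro h
    refine ⟨trivial, trivial, ?_⟩
    exact h.map (⟨fun v => ⟨v, trivial⟩, fun hab => hab⟩ : G →g G.induce Set.univ)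

lemma supp_ncard_eq {G : SimpleGraph V} {W : Set V} (x : ↥W) :
    ((G.induce W).connectedComponentMk x).supp.ncard = (cc G W ↑x).ncard := by
  have himg : Subtype.val '' ((G.induce W).connectedComponentMk x).supp = cc G W ↑x := by
    ext y
    simp only [Set.mem_image, SimpleGraph.ConnectedComponent.mem_supp_iff,
      SimpleGraph.ConnectedComponent.eq]
    constructor
    · rintro ⟨⟨y, hy⟩, hr, rfl⟩; exact ⟨x.2, hy, hr.symm⟩
    · rintro ⟨hx, hy, hr⟩; exact ⟨⟨y, hy⟩, hr.symm, rfl⟩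
  rw [← himg, Set.ncard_image_of_injective _ Subtype.val_injective]

lemma supp_ncard_eq' {G : SimpleGraph V} {W : Set V} (x : ↥W) :
    (SimpleGraph.ConnectedComponent.supp (Quot.mk (G.induce W).Reachable x)).ncard
      = (cc G W ↑x).ncard :=
  supp_ncard_eq x

lemma isAcyclic_induce {G : SimpleGraph V} (hG : G.IsAcyclic) (W : Set V) :
    (G.induce W).IsAcyclic := by
  intro v p hp
  exact hG _ (hp.map (f := vhom G W) Subtype.val_injective)

/-- every vertex reachable from `v` (other than `v`) lies in the `v`-deleted component of
some neighbor of `v`. -/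
lemma exists_exit {G : SimpleGraph V} {v y : V} (h : G.Reachable v y) (hy : y ≠ v) :
    ∃ w, G.Adj v w ∧ y ∈ cc G {v}ᶜ w := by
  classical
  set D : Set V := {v} ∪ ⋃ w ∈ {w | G.Adj v w}, cc G {v}ᶜ w with hD
  have hcl : ∀ a b, a ∈ D → b ∈ Set.univ → G.Adj a b → b ∈ D := by
    rintro a b ha - hab
    rcases ha with ha | ha
    · rcases ha with rfl
      refine Or.inr (Set.mem_biUnion hab (mem_cc_self G ?_))
      simpa using hab.ne'
    · obtain ⟨w, hw, hb⟩ := Set.mem_iUnion₂.mp ha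
      by_cases hbv : b = v
      · exact Or.inl (by simp [hbv])
      · exact Or.inr (Set.mem_biUnion hw (adj_mem_cc hb (by simpa using hbv) hab))
  have hyD : y ∈ D := by
    have h1 : y ∈ cc G Set.univ v := mem_cc_univ.mpr h
    have hvD : v ∈ D := Set.mem_union_left _ rfl
    exact cc_subset_of_closed (W := Set.univ) (D := D) hvD hcl h1
  rcases hyD with h1 | h1
  · exact absurd h1 (by simpa using hy)
  · obtain ⟨w, hw, hb⟩ := Set.mem_iUnion₂.mp h1
    exact ⟨w, hw, hb⟩

/-- In an acyclic graph, the only vertex of the `v`-deleted component of a neighbor `w`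
that is adjacent to `v` is `w` itself. -/
lemma eq_of_adj_of_mem_cc {G : SimpleGraph V} (hG : G.IsAcyclic) {v w x : V}
    (hvw : G.Adj v w) (hx : x ∈ cc G ({v}ᶜ : Set V) w) (hxv : G.Adj x v) : x = w := by
  classical
  by_contra hne
  obtain ⟨hw, hxm, hr⟩ := hx
  obtain ⟨q0⟩ := hr
  let q1 : G.Walk w x := q0.map (vhom G ({v}ᶜ : Set V))
  have hq1 : v ∉ q1.support := by
    intro hv
    rw [show q1.support = (q0.map (vhom G ({v}ᶜ : Set V))).support from rfl, Walk.support_map] at hv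
    obtain ⟨⟨z, hz⟩, -, hz2⟩ := List.mem_map.mp hv
    exact hz (show z ∈ ({v} : Set V) from hz2)
  have hsupp : v ∉ (q1.toPath : G.Walk w x).support :=
    fun hvp => hq1 (Walk.support_toPath_subset _ hvp)
  have hP1 : (Walk.cons hvw (q1.toPath : G.Walk w x)).IsPath :=
    (q1.toPath.2).cons hsupp
  have hP2 : (Walk.cons hxv.symm Walk.nil : G.Walk v x).IsPath := by
    simp [Walk.cons_isPath_iff, hxv.ne']
  have heq := hG.path_unique ⟨_, hP1⟩ ⟨_, hP2⟩
  have hlen := congrArg (fun P : G.Path v x => (P : G.Walk v x).length) heq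
  simp only [Walk.length_cons, Walk.length_nil] at hlen
  have h0 : (q1.toPath : G.Walk w x).length = 0 := by omega
  exact hne ((Walk.eq_of_length_eq_zero h0) ▸ rfl)

variable [Fintype V]

/-- vertices whose `v`-deleted component is small -/
def Small (G : SimpleGraph V) (C : ℕ) (v : V) : Set V :=
  {x | x ≠ v ∧ (cc G ({v}ᶜ : Set V) x).ncard ≤ C}

lemma exists_good_vertex {G : SimpleGraph V} (hG : G.IsAcyclic) {C : ℕ}
    {x₀ : V} (hbig : C + 1 ≤ (cc G Set.univ x₀).ncard) :
    ∃ v : V, C + 1 ≤ (insert v (Small G C v)).ncard := by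
  classical
  by_cases hP : ∃ v w, G.Adj v w ∧ C + 1 ≤ (cc G ({v}ᶜ : Set V) w).ncard
  · set T : Set ℕ := {n | ∃ v w, G.Adj v w ∧ (cc G ({v}ᶜ : Set V) w).ncard = n ∧ C + 1 ≤ n}
      with hT
    have hTne : T.Nonempty := by
      obtain ⟨v, w, hvw, hn⟩ := hP
      exact ⟨_, v, w, hvw, rfl, hn⟩
    obtain ⟨v, w, hvw, hcard, hge⟩ := Nat.sInf_mem hTne
    refine ⟨w, ?_⟩
    set B : Set V := cc G ({v}ᶜ : Set V) w with hB
    have hwv : w ≠ v := hvw.ne'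
    have hwB : w ∈ B := mem_cc_self G (by simpa using hwv)
    have hBsub : B ⊆ insert w (Small G C w) := by
      intro y hyB
      by_cases hyw : y = w
      · exact hyw ▸ Set.mem_insert _ _
      refine Set.mem_insert_of_mem _ ⟨hyw, ?_⟩
      by_contra hbig2
      push_neg at hbig2
      have hbig2 : C + 1 ≤ (cc G ({w}ᶜ : Set V) y).ncard := hbig2
      have hclosed : ∀ a b, a ∈ B \ {w} → b ∈ ({w}ᶜ : Set V) → G.Adj a b → b ∈ B \ {w} := by
        rintro a b ⟨haB, haw⟩ hbw hab
        have hbv : b ≠ v := by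
          rintro rfl
          exact haw (by simp [eq_of_adj_of_mem_cc hG hvw haB hab])
        exact ⟨adj_mem_cc haB (by simpa using hbv) hab, hbw⟩
      have hsub2 : cc G ({w}ᶜ : Set V) y ⊆ B \ {w} :=
        cc_subset_of_closed ⟨hyB, hyw⟩ hclosed
      have hlt : (cc G ({w}ᶜ : Set V) y).ncard < B.ncard :=
        lt_of_le_of_lt (Set.ncard_le_ncard hsub2 (Set.toFinite _))
          (Set.ncard_diff_singleton_lt_of_mem hwB (Set.toFinite _))
      have hreach : G.Reachable w y := reachable_of_mem_cc hyB
      obtain ⟨w', hww', hy'⟩ := exists_exit hreach hyw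
      have hmem : (cc G ({w}ᶜ : Set V) w').ncard ∈ T := by
        refine ⟨w, w', hww', rfl, ?_⟩
        rw [← cc_eq_of_mem hy']
        exact hbig2
      have hle := Nat.sInf_le hmem
      rw [← cc_eq_of_mem hy'] at hle
      omega
    calc C + 1 ≤ B.ncard := hcard ▸ hge
      _ ≤ (insert w (Small G C w)).ncard := Set.ncard_le_ncard hBsub (Set.toFinite _)
  · push_neg at hP
    refine ⟨x₀, ?_⟩
    have hsub : cc G Set.univ x₀ ⊆ insert x₀ (Small G C x₀) := by
      intro y hy
      by_cases hyx : y = x₀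
      · exact hyx ▸ Set.mem_insert _ _
      · have hr : G.Reachable x₀ y := reachable_of_mem_cc hy
        obtain ⟨w, hw, hy'⟩ := exists_exit hr hyx
        refine Set.mem_insert_of_mem _ ⟨hyx, ?_⟩
        rw [cc_eq_of_mem hy']
        exact Nat.lt_succ_iff.mp (hP x₀ w hw)
    exact le_trans hbig (Set.ncard_le_ncard hsub (Set.toFinite _))

universe u

theorem main (n : ℕ) : ∀ {V : Type u} [Fintype V] (G : SimpleGraph V), G.IsAcyclic →
    ∀ C : ℕ, 1 ≤ C → Fintype.card V ≤ n →
    ∃ S : Finset V,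
      (∀ c : (G.induce ((↑S : Set V)ᶜ)).ConnectedComponent, c.supp.ncard ≤ C) ∧
      (C + 1) * S.card ≤ Fintype.card V := by
  induction n with
  | zero =>
    intro V _ G hG C hC hcard
    refine ⟨∅, ?_, by simp⟩
    intro c
    obtain ⟨x, -⟩ := c.exists_rep
    exact ((Fintype.card_eq_zero_iff.mp (Nat.le_zero.mp hcard)).elim x.1)
  | succ n ih =>
    intro V _ G hG C hC hcard
    classical
    by_cases hall : ∀ x : V, (cc G Set.univ x).ncard ≤ C
    · refine ⟨∅, ?_, by simp⟩
      intro c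
      obtain ⟨x, hx⟩ := c.exists_rep
      rw [← hx, supp_ncard_eq']
      calc (cc G _ (↑x)).ncard ≤ (cc G Set.univ ↑x).ncard :=
            Set.ncard_le_ncard (cc_mono (Set.subset_univ _) _) (Set.toFinite _)
        _ ≤ C := hall _
    · push_neg at hall
      obtain ⟨x₀, hx₀⟩ := hall
      obtain ⟨v, hA⟩ := exists_good_vertex hG (Nat.succ_le_of_lt hx₀)
      set A : Set V := insert v (Small G C v) with hAdef
      have hvA : v ∈ A := Set.mem_insert _ _
      -- induction on the complement
      have hcardA : Fintype.card ↥(Aᶜ) = (Aᶜ).ncard := by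
        rw [← Nat.card_coe_set_eq, Nat.card_eq_fintype_card]
      have hsplit : A.ncard + (Aᶜ).ncard = Fintype.card V := by
        rw [Set.ncard_add_ncard_compl, Nat.card_eq_fintype_card]
      have hcard' : Fintype.card ↥(Aᶜ) ≤ n := by omega
      obtain ⟨S'', h1, h2⟩ := ih (G.induce (Aᶜ)) (isAcyclic_induce hG _) C hC hcard'
      refine ⟨insert v (S''.image Subtype.val), ?_, ?_⟩
      · -- all components small
        intro c
        obtain ⟨x, hx⟩ := c.exists_rep
        rw [← hx, supp_ncard_eq']
        have hxS : (x : V) ∉ (insert v (S''.image Subtype.val) : Finset V) := by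
          have := x.2; simpa using this
        have hSv : ((↑(insert v (S''.image Subtype.val) : Finset V) : Set V))ᶜ
            ⊆ ({v}ᶜ : Set V) := by
          intro z hz
          simp only [Set.mem_compl_iff, Finset.coe_insert, Set.mem_insert_iff] at hz ⊢
          intro h; exact hz (Or.inl h)
        by_cases hxSm : (x : V) ∈ Small G C v
        · calc (cc G _ (↑x)).ncard ≤ (cc G ({v}ᶜ : Set V) ↑x).ncard :=
              Set.ncard_le_ncard (cc_mono hSv _) (Set.toFinite _)
            _ ≤ C := hxSm.2
        · -- x outside A
          have hxv : (x : V) ≠ v := by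
            intro h; exact hxS (by simp [h])
          have hxA : (x : V) ∈ Aᶜ := by
            simp only [hAdef, Set.mem_compl_iff, Set.mem_insert_iff]
            rintro (h | h)
            · exact hxv h
            · exact hxSm h
          have hxS'' : (⟨(x : V), hxA⟩ : ↥(Aᶜ)) ∉ S'' := by
            intro h
            exact hxS (Finset.mem_insert_of_mem (Finset.mem_image_of_mem _ h))
          set x' : ↥(Aᶜ) := ⟨(x : V), hxA⟩ with hx'
          set W'' : Set ↥(Aᶜ) := (↑S'' : Set ↥(Aᶜ))ᶜ with hW''
          have hx'W : x' ∈ W'' := by simpa [hW''] using hxS''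
          set D : Set V := Subtype.val '' (cc (G.induce (Aᶜ)) W'' x') with hDdef
          have hxD : (x : V) ∈ D := ⟨x', mem_cc_self _ hx'W, rfl⟩
          have hclosed : ∀ a b, a ∈ D →
              b ∈ ((↑(insert v (S''.image Subtype.val) : Finset V) : Set V))ᶜ →
              G.Adj a b → b ∈ D := by
            rintro a b ⟨a', ha', rfl⟩ hb hab
            have hbS : b ∉ (insert v (S''.image Subtype.val) : Finset V) := by
              simpa using hb
            have hbv : b ≠ v := by
              intro h; exact hbS (by simp [h])
            have haA : (a' : V) ∈ Aᶜ := a'.2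
            have hbSm : b ∉ Small G C v := by
              intro hbSm
              have hav : (a' : V) ≠ v := by
                intro h
                exact (haA : (a' : V) ∉ A) (h ▸ hvA)
              have haMem : (a' : V) ∈ cc G ({v}ᶜ : Set V) b :=
                adj_mem_cc (mem_cc_self G (by simpa using hbv)) (by simpa using hav) hab.symm
              have : (a' : V) ∈ Small G C v :=
                ⟨hav, by rw [cc_eq_of_mem haMem]; exact hbSm.2⟩
              exact (haA : (a' : V) ∉ A) (Set.mem_insert_of_mem _ this)
            have hbA : b ∈ Aᶜ := by
              simp only [hAdef, Set.mem_compl_iff, Set.mem_insert_iff]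
              rintro (h | h)
              · exact hbv h
              · exact hbSm h
            have hbS'' : (⟨b, hbA⟩ : ↥(Aᶜ)) ∈ W'' := by
              simp only [hW'', Set.mem_compl_iff, Finset.mem_coe]
              intro h
              exact hbS (Finset.mem_insert_of_mem (Finset.mem_image_of_mem _ h))
            exact ⟨⟨b, hbA⟩, adj_mem_cc ha' hbS''
              (show (G.induce (Aᶜ)).Adj a' ⟨b, hbA⟩ from hab), rfl⟩
          have hccD : cc G _ (↑x) ⊆ D := cc_subset_of_closed hxD hclosed
          have hDcard : D.ncard = (cc (G.induce (Aᶜ)) W'' x').ncard := by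
            rw [hDdef, Set.ncard_image_of_injective _ Subtype.val_injective]
          have hcc' : (cc (G.induce (Aᶜ)) W'' x').ncard ≤ C := by
            have := h1 ((((G.induce (Aᶜ)).induce W'')).connectedComponentMk ⟨x', hx'W⟩)
            rwa [supp_ncard_eq] at this
          calc (cc G _ (↑x)).ncard ≤ D.ncard :=
              Set.ncard_le_ncard hccD (Set.toFinite _)
            _ ≤ C := by omega
      · -- counting
        have hvnotmem : v ∉ S''.image (Subtype.val : ↥(Aᶜ) → V) := by
          intro h
          obtain ⟨z, -, hz⟩ := Finset.mem_image.mp h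
          exact (z.2 : (z : V) ∉ A) (hz ▸ hvA)
        rw [Finset.card_insert_of_notMem hvnotmem,
          Finset.card_image_of_injective _ Subtype.val_injective]
        have hAn : C + 1 ≤ A.ncard := hA
        have h2' : (C + 1) * S''.card ≤ (Aᶜ).ncard := by omega
        have := Nat.mul_le_mul_left (C + 1) (Nat.le_refl S''.card)
        calc (C + 1) * (S''.card + 1) = (C + 1) * S''.card + (C + 1) := by ring
          _ ≤ (Aᶜ).ncard + A.ncard := Nat.add_le_add h2' hAn
          _ = Fintype.card V := by omega

end ForestDismantleAux

/-- a forest on `N` vertices admits a `C`-dismantling set `S`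
with `(C+1)·|S| ≤ N`. -/
theorem forest_dismantling {V : Type*} [Fintype V] (G : SimpleGraph V)
    (hG : G.IsAcyclic) (C : ℕ) (hC : 1 ≤ C) :
    ∃ S : Finset V,
      (∀ c : (G.induce ((↑S : Set V)ᶜ)).ConnectedComponent, c.supp.ncard ≤ C) ∧
      (C + 1) * S.card ≤ Fintype.card V := by
  exact ForestDismantleAux.main (Fintype.card V) G hG C hC (le_refl _)
end

section
/- Let G be a finite simple graph on N vertices, let C ≥ 1 be an integer, and let S₀ be a decycling set of G. Then there exists a C-dismantling set S of G with S₀ ⊆ S and (C+1)·(|S| − |S₀|) ≤ N. In particular, the minimal size of a C-dismantling set is at most the minimal size of a decycling set plus N/(C+1). -/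
open SimpleGraph Finset

set_option linter.unusedSectionVars false

section Aux

variable {V : Type*} [Fintype V] [DecidableEq V] (G : SimpleGraph V)

/-- Reachability within a carrier finset: there is a walk all of whose
vertices lie in `A`. -/
def GReach (A : Finset V) (x y : V) : Prop :=
  ∃ p : G.Walk x y, ∀ z ∈ p.support, z ∈ A

variable {G}

lemma GReach.refl {A : Finset V} {x : V} (hx : x ∈ A) : GReach G A x x :=
  ⟨Walk.nil, by simpa using hx⟩

lemma GReach.symm {A : Finset V} {x y : V} : GReach G A x y → GReach G A y x := by
  rintro ⟨p, hp⟩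
  exact ⟨p.reverse, fun z hz => hp z (by simpa [Walk.support_reverse] using hz)⟩

lemma GReach.trans {A : Finset V} {x y z : V} :
    GReach G A x y → GReach G A y z → GReach G A x z := by
  rintro ⟨p, hp⟩ ⟨q, hq⟩
  refine ⟨p.append q, fun u hu => ?_⟩
  rw [Walk.mem_support_append_iff] at hu
  rcases hu with hu | hu
  · exact hp u hu
  · exact hq u hu

lemma GReach.mem_left {A : Finset V} {x y : V} (h : GReach G A x y) : x ∈ A := by
  obtain ⟨p, hp⟩ := h; exact hp _ p.start_mem_support

lemma GReach.mem_right {A : Finset V} {x y : V} (h : GReach G A x y) : y ∈ A := by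
  obtain ⟨p, hp⟩ := h; exact hp _ p.end_mem_support

lemma GReach.mono {A B : Finset V} {x y : V} (hAB : A ⊆ B) (h : GReach G A x y) :
    GReach G B x y := by
  obtain ⟨p, hp⟩ := h; exact ⟨p, fun z hz => hAB (hp z hz)⟩

lemma GReach.step {A : Finset V} {x y z : V} (h : GReach G A x y) (hadj : G.Adj y z)
    (hz : z ∈ A) : GReach G A x z :=
  h.trans ⟨Walk.cons hadj Walk.nil, by
    intro u hu
    simp only [Walk.support_cons, Walk.support_nil, List.mem_cons, List.mem_singleton] at hu
    rcases hu with rfl | rfl | h'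
    · exact h.mem_right
    · exact hz
    · exact absurd h' List.not_mem_nil⟩

lemma GReach.of_mem_support {A : Finset V} {x y : V} {p : G.Walk x y}
    (hp : ∀ z ∈ p.support, z ∈ A) {z : V} (hz : z ∈ p.support) : GReach G A x z :=
  ⟨p.takeUntil z hz, fun u hu => hp u (Walk.support_takeUntil_subset _ _ hu)⟩

lemma GReach.exists_path {A : Finset V} {x y : V} (h : GReach G A x y) :
    ∃ p : G.Walk x y, p.IsPath ∧ ∀ z ∈ p.support, z ∈ A := by
  obtain ⟨p, hp⟩ := h
  exact ⟨p.bypass, p.bypass_isPath, fun z hz => hp z (p.support_bypass_subset hz)⟩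


open Classical in
/-- The connected component of `x` within carrier `A`, as a finset. -/
noncomputable def compIn (G : SimpleGraph V) (A : Finset V) (x : V) : Finset V :=
  Finset.univ.filter (fun y => GReach G A x y)

open Classical in
/-- Vertices of `K` separated from `r` when `w` is removed from `K`. -/
noncomputable def sep (G : SimpleGraph V) (K : Finset V) (w r : V) : Finset V :=
  K.filter (fun x => ¬ GReach G (K.erase w) x r)

/-- Vertices of `A` whose component within `A` has more than `C` vertices. -/
noncomputable def bigS (G : SimpleGraph V) (C : ℕ) (A : Finset V) : Finset V :=
  A.filter (fun x => C + 1 ≤ (compIn G A x).card)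

lemma mem_compIn {A : Finset V} {x y : V} : y ∈ compIn G A x ↔ GReach G A x y := by
  simp [compIn]

lemma mem_sep {K : Finset V} {w r x : V} :
    x ∈ sep G K w r ↔ x ∈ K ∧ ¬ GReach G (K.erase w) x r := by
  simp [sep]

lemma mem_bigS {C : ℕ} {A : Finset V} {x : V} :
    x ∈ bigS G C A ↔ x ∈ A ∧ C + 1 ≤ (compIn G A x).card := by
  simp [bigS]

lemma compIn_subset {A : Finset V} {x : V} : compIn G A x ⊆ A := fun y hy =>
  (mem_compIn.mp hy).mem_right

lemma compIn_mono {A B : Finset V} (hAB : A ⊆ B) (x : V) : compIn G A x ⊆ compIn G B x :=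
  fun y hy => mem_compIn.mpr ((mem_compIn.mp hy).mono hAB)

lemma compIn_eq_of_reach {A : Finset V} {x y : V} (h : GReach G A x y) :
    compIn G A x = compIn G A y := by
  ext z
  simp only [mem_compIn]
  exact ⟨fun h' => h.symm.trans h', fun h' => h.trans h'⟩

/-- Within its own component, everything is mutually reachable. -/
lemma compIn_conn {A : Finset V} {v : V} :
    ∀ x ∈ compIn G A v, ∀ y ∈ compIn G A v, GReach G (compIn G A v) x y := by
  intro x hx y hy
  obtain ⟨p, hp⟩ := (mem_compIn.mp hx).symm.trans (mem_compIn.mp hy)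
  refine ⟨p, fun z hz => ?_⟩
  exact mem_compIn.mpr ((mem_compIn.mp hx).trans (GReach.of_mem_support hp hz))

variable (G) in
/-- Uniqueness of paths with support inside a carrier `A`. -/
def PathUnique (A : Finset V) : Prop :=
  ∀ ⦃x y : V⦄ (p q : G.Walk x y), p.IsPath → q.IsPath →
    (∀ z ∈ p.support, z ∈ A) → (∀ z ∈ q.support, z ∈ A) → p = q

lemma PathUnique.mono {A B : Finset V} (h : PathUnique G B) (hs : A ⊆ B) :
    PathUnique G A := fun _ _ p q hp hq hps hqs =>
  h p q hp hq (fun z hz => hs (hps z hz)) (fun z hz => hs (hqs z hz))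


variable (G) in
/-- Lift a walk whose support lies in `s` to the induced subgraph on `s`. -/
def liftWalk {s : Set V} : {x y : V} → (p : G.Walk x y) → (∀ z ∈ p.support, z ∈ s) →
    (hx : x ∈ s) → (hy : y ∈ s) → (G.induce s).Walk ⟨x, hx⟩ ⟨y, hy⟩
  | _, _, Walk.nil, _, _, _ => Walk.nil
  | _, _, @Walk.cons _ _ _ b _ h p, hp, hx, hy =>
      Walk.cons (v := (⟨b, hp b (List.mem_cons_of_mem _ p.start_mem_support)⟩ : s)) h
        (liftWalk p (fun z hz => hp z (List.mem_cons_of_mem _ hz))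
          (hp b (List.mem_cons_of_mem _ p.start_mem_support)) hy)

lemma liftWalk_support {s : Set V} : ∀ {x y : V} (p : G.Walk x y)
    (hp : ∀ z ∈ p.support, z ∈ s) (hx : x ∈ s) (hy : y ∈ s),
    (liftWalk G p hp hx hy).support.map Subtype.val = p.support
  | _, _, Walk.nil, _, _, _ => by simp [liftWalk]
  | _, _, Walk.cons h p, hp, hx, hy => by
      simp only [liftWalk]
      exact congrArg (List.cons _) (liftWalk_support p _ _ hy)

lemma liftWalk_map {s : Set V} : ∀ {x y : V} (p : G.Walk x y)
    (hp : ∀ z ∈ p.support, z ∈ s) (hx : x ∈ s) (hy : y ∈ s),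
    (liftWalk G p hp hx hy).map (Embedding.induce s).toHom = p
  | _, _, Walk.nil, _, _, _ => by simp [liftWalk]
  | _, _, Walk.cons h p, hp, hx, hy => by
      simp only [liftWalk, Walk.map_cons]
      congr 1
      exact congrArg (Walk.cons h) (liftWalk_map p _ _ _)

lemma pathUnique_of_acyclic {A : Finset V}
    (h : (G.induce ((↑A : Set V))).IsAcyclic) : PathUnique G A := by
  intro x y p q hp hq hps hqs
  have hx : (x : V) ∈ (↑A : Set V) := hps _ p.start_mem_support
  have hy : (y : V) ∈ (↑A : Set V) := hps _ p.end_mem_support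
  have hps' : ∀ z ∈ p.support, z ∈ (↑A : Set V) := fun z hz => hps z hz
  have hqs' : ∀ z ∈ q.support, z ∈ (↑A : Set V) := fun z hz => hqs z hz
  have hp1 : (liftWalk G p hps' hx hy).IsPath := by
    rw [Walk.isPath_def]
    exact List.Nodup.of_map Subtype.val
      (by rw [liftWalk_support]; exact (Walk.isPath_def _).mp hp)
  have hq1 : (liftWalk G q hqs' hx hy).IsPath := by
    rw [Walk.isPath_def]
    exact List.Nodup.of_map Subtype.val
      (by rw [liftWalk_support]; exact (Walk.isPath_def _).mp hq)
  have h1 : liftWalk G p hps' hx hy = liftWalk G q hqs' hx hy := by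
    have := h.path_unique ⟨_, hp1⟩ ⟨_, hq1⟩
    exact congrArg Subtype.val this
  have e1 := liftWalk_map p hps' hx hy
  have e2 := liftWalk_map q hqs' hx hy
  rw [h1] at e1
  exact e1.symm.trans e2

lemma reachable_iff_greach {s : Set V} {A : Finset V} (hsA : ∀ z, z ∈ A ↔ z ∈ s)
    {x y : V} (hx : x ∈ s) (hy : y ∈ s) :
    (G.induce s).Reachable ⟨x, hx⟩ ⟨y, hy⟩ ↔ GReach G A x y := by
  constructor
  · rintro ⟨W⟩
    refine ⟨W.map (Embedding.induce s).toHom, ?_⟩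
    intro z hz
    change z ∈ (W.map (Embedding.induce s).toHom).support at hz
    rw [Walk.support_map, List.mem_map] at hz
    obtain ⟨u, hu, rfl⟩ := hz
    exact (hsA _).mpr u.prop
  · rintro ⟨p, hp⟩
    exact ⟨liftWalk G p (fun z hz => (hsA z).mp (hp z hz)) hx hy⟩

lemma supp_ncard_eq (S : Finset V) (c : (G.induce ((↑S : Set V)ᶜ)).ConnectedComponent) :
    ∃ x, x ∈ Sᶜ ∧ c.supp.ncard = (compIn G Sᶜ x).card := by
  obtain ⟨v, rfl⟩ := c.exists_rep
  have hmem : ∀ z : V, z ∈ Sᶜ ↔ z ∈ ((↑S : Set V)ᶜ) := by intro z; simp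
  have himg : Subtype.val '' ((G.induce ((↑S : Set V)ᶜ)).connectedComponentMk v).supp
      = ↑(compIn G Sᶜ v.val) := by
    ext y
    simp only [Set.mem_image, ConnectedComponent.mem_supp_iff, ConnectedComponent.eq,
      Finset.mem_coe, mem_compIn]
    constructor
    · rintro ⟨u, hu, rfl⟩
      exact ((reachable_iff_greach hmem u.prop v.prop).mp hu).symm
    · intro h
      have hy : y ∈ ((↑S : Set V)ᶜ) := (hmem y).mp h.mem_right
      exact ⟨⟨y, hy⟩, (reachable_iff_greach hmem hy v.prop).mpr h.symm, rfl⟩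
  have key : ((G.induce ((↑S : Set V)ᶜ)).connectedComponentMk v).supp.ncard
      = (compIn G Sᶜ v.val).card := by
    rw [← Set.ncard_image_of_injective _ Subtype.val_injective, himg, Set.ncard_coe_finset]
  exact ⟨v.val, (hmem _).mpr v.prop, key⟩


/-- Key lemma: in a "tree" carrier `K` (connected, unique paths) with more than `C`
vertices, for any root `r` there is a vertex `w` whose removal separates at least
`C + 1` vertices (counting `w`) from `r`, all lying in components of size at most `C`. -/
lemma tree_lemma (C : ℕ) :
    ∀ n (K : Finset V), K.card ≤ n →
      (∀ x ∈ K, ∀ y ∈ K, GReach G K x y) → PathUnique G K → C + 1 ≤ K.card →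
      ∀ r ∈ K, ∃ w ∈ K,
        C + 1 ≤ (sep G K w r).card ∧
        ∀ x ∈ K, ¬ GReach G (K.erase w) x r → x ≠ w →
          (compIn G (K.erase w) x).card ≤ C := by
  intro n
  induction n with
  | zero =>
    intro K hK0 _ _ hcard r _
    omega
  | succ n ih =>
    intro K hKn Kconn Kuniq hcard r hr
    by_cases hall : ∀ x ∈ K.erase r, (compIn G (K.erase r) x).card ≤ C
    · refine ⟨r, hr, ?_, ?_⟩
      · have hKeq : sep G K r r = K := by
          ext x
          rw [mem_sep]
          exact ⟨fun h => h.1, fun hx => ⟨hx, fun h => Finset.notMem_erase r K h.mem_right⟩⟩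
        rw [hKeq]; exact hcard
      · intro x hx _ hxr
        exact hall x (Finset.mem_erase.mpr ⟨hxr, hx⟩)
    · push_neg at hall
      obtain ⟨x₀, hx₀, hbigB⟩ := hall
      set B := compIn G (K.erase r) x₀ with hBdef
      have hbigB : C + 1 ≤ B.card := hbigB
      have hBsub : B ⊆ K.erase r := compIn_subset
      have hBK : B ⊆ K := hBsub.trans (Finset.erase_subset r K)
      have hrB : r ∉ B := fun h => Finset.notMem_erase r K (hBsub h)
      have hx₀B : x₀ ∈ B := mem_compIn.mpr (GReach.refl hx₀)
      -- find the attachment vertex b : the neighbour of r inside B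
      obtain ⟨p, hpath, hpsub⟩ : ∃ p : G.Walk r x₀, p.IsPath ∧ ∀ z ∈ p.support, z ∈ K :=
        (Kconn r hr x₀ (hBK hx₀B)).exists_path
      cases p with
      | nil => exact absurd hx₀ (by simp)
      | @cons _ b _ hadj q =>
        have hqpath : q.IsPath := hpath.of_cons
        have hrq : r ∉ q.support := (Walk.cons_isPath_iff _ _).mp hpath |>.2
        have hqsub : ∀ z ∈ q.support, z ∈ K.erase r := fun z hz =>
          Finset.mem_erase.mpr ⟨fun h => hrq (h ▸ hz), hpsub z (List.mem_cons_of_mem _ hz)⟩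
        have hbB : b ∈ B := mem_compIn.mpr (GReach.symm ⟨q, hqsub⟩)
        have Bconn : ∀ x ∈ B, ∀ y ∈ B, GReach G B x y := compIn_conn
        have Buniq : PathUnique G B := Kuniq.mono hBK
        have hBn : B.card ≤ n := by
          have h1 : B.card ≤ (K.erase r).card := Finset.card_le_card hBsub
          have h2 : (K.erase r).card = K.card - 1 := Finset.card_erase_of_mem hr
          omega
        obtain ⟨w, hwB, hDB, hiiB⟩ := ih B hBn Bconn Buniq hbigB b hbB
        have hwK : w ∈ K := hBK hwB
        have hrw : r ≠ w := fun h => hrB (h ▸ hwB)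
        -- (★2) every vertex outside B still reaches r after removing w
        have star2 : ∀ x ∈ K, x ∉ B → GReach G (K.erase w) x r := by
          intro x hx hxB
          by_cases hxr : x = r
          · subst hxr
            exact GReach.refl (Finset.mem_erase.mpr ⟨hrw, hr⟩)
          · obtain ⟨p2, hp2path, hp2sub⟩ := (Kconn x hx r hr).exists_path
            by_cases hwp : w ∈ p2.support
            · exfalso
              have hnd : p2.support.Nodup := (Walk.isPath_def _).mp hp2path
              rw [← Walk.take_spec p2 hwp, Walk.support_append] at hnd
              have hdis := (List.nodup_append'.mp hnd).2.2
              have hrtail : r ∈ (p2.dropUntil w hwp).support.tail :=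
                Walk.end_mem_tail_support_of_ne (fun h => hrw h.symm) _
              have hrtake : r ∉ (p2.takeUntil w hwp).support := fun h => hdis h hrtail
              have h1 : GReach G (K.erase r) x w :=
                ⟨p2.takeUntil w hwp, fun z hz => Finset.mem_erase.mpr
                  ⟨fun h => hrtake (h ▸ hz), hp2sub z (Walk.support_takeUntil_subset _ _ hz)⟩⟩
              exact hxB (mem_compIn.mpr ((mem_compIn.mp hwB).trans h1.symm))
            · exact ⟨p2, fun z hz => Finset.mem_erase.mpr
                ⟨fun h => hwp (h ▸ hz), hp2sub z hz⟩⟩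
        -- (★1) a vertex of B that still reaches r after removing w also reaches b inside B
        have star1 : ∀ x, GReach G (K.erase w) x r → x ∈ B → GReach G (B.erase w) x b := by
          intro x hre hxB
          obtain ⟨p1, hp1path, hp1sub⟩ := hre.exists_path
          obtain ⟨q1, hq1path, hq1sub⟩ := (Bconn x hxB b hbB).exists_path
          have hrq1 : r ∉ q1.support := fun h => hrB (hq1sub r h)
          have hq'path : (q1.concat hadj.symm).IsPath := by
            rw [Walk.isPath_def, Walk.support_concat]
            refine List.Nodup.append ((Walk.isPath_def _).mp hq1path) (List.nodup_singleton r) ?_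
            intro z hz hz'
            rw [List.mem_singleton] at hz'
            exact hrq1 (hz' ▸ hz)
          have heq : p1 = q1.concat hadj.symm := by
            refine Kuniq p1 (q1.concat hadj.symm) hp1path hq'path
              (fun z hz => Finset.mem_of_mem_erase (hp1sub z hz)) ?_
            intro z hz
            rw [Walk.support_concat, List.mem_append] at hz
            rcases hz with hz | hz
            · exact hBK (hq1sub z hz)
            · rw [List.mem_singleton] at hz; exact hz ▸ hr
          have hwq1 : w ∉ q1.support := by
            intro hw
            have : w ∈ p1.support := by
              rw [heq, Walk.support_concat, List.mem_append]
              exact Or.inl hw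
            exact Finset.notMem_erase w K (by exact (hp1sub w this : w ∈ K.erase w))
          exact ⟨q1, fun z hz => Finset.mem_erase.mpr ⟨fun h => hwq1 (h ▸ hz), hq1sub z hz⟩⟩
        -- (★3) components avoiding r after removing w stay inside B
        have star3 : ∀ x ∈ B, ¬ GReach G (K.erase w) x r →
            compIn G (K.erase w) x = compIn G (B.erase w) x := by
          intro x hxB hnr
          refine Finset.Subset.antisymm ?_ (compIn_mono (Finset.erase_subset_erase _ hBK) x)
          intro y hy
          obtain ⟨p1, hp1⟩ := mem_compIn.mp hy
          have hsupB : ∀ z ∈ p1.support, z ∈ B := by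
            intro z hz
            by_contra hzB
            have h1 : GReach G (K.erase w) x z := GReach.of_mem_support hp1 hz
            have h2 := star2 z (Finset.mem_of_mem_erase (hp1 z hz)) hzB
            exact hnr (h1.trans h2)
          exact mem_compIn.mpr ⟨p1, fun z hz => Finset.mem_erase.mpr
            ⟨(Finset.mem_erase.mp (hp1 z hz)).1, hsupB z hz⟩⟩
        refine ⟨w, hwK, ?_, ?_⟩
        · refine le_trans hDB (Finset.card_le_card ?_)
          intro x hx
          rw [mem_sep] at hx ⊢
          exact ⟨hBK hx.1, fun hre => hx.2 (star1 x hre hx.1)⟩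
        · intro x hxK hnr hxw
          have hxB : x ∈ B := by
            by_contra h
            exact hnr (star2 x hxK h)
          have hnrB : ¬ GReach G (B.erase w) x b := by
            intro h
            exact hnr (((h.mono (Finset.erase_subset_erase _ hBK)).step hadj.symm
              (Finset.mem_erase.mpr ⟨hrw, hr⟩)))
          rw [star3 x hxB hnr]
          exact hiiB x hxB hnrB hxw


lemma main_lemma (C : ℕ) (hC : 1 ≤ C) :
    ∀ m (S : Finset V), PathUnique G Sᶜ → (bigS G C Sᶜ).card ≤ m →
      ∃ T : Finset V, S ⊆ T ∧ (∀ x ∈ Tᶜ, (compIn G Tᶜ x).card ≤ C) ∧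
        (C + 1) * (T.card - S.card) ≤ (bigS G C Sᶜ).card := by
  intro m
  induction m with
  | zero =>
    intro S hP hm
    refine ⟨S, Finset.Subset.refl _, ?_, by simp⟩
    intro x hx
    by_contra h
    have hxb : x ∈ bigS G C Sᶜ := mem_bigS.mpr ⟨hx, by omega⟩
    have : (bigS G C Sᶜ) = ∅ := Finset.card_eq_zero.mp (Nat.le_zero.mp hm)
    rw [this] at hxb
    exact absurd hxb (Finset.notMem_empty x)
  | succ m ih =>
    intro S hP hm
    by_cases hE : ∀ x ∈ Sᶜ, (compIn G Sᶜ x).card ≤ C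
    · exact ⟨S, Finset.Subset.refl _, hE, by simp⟩
    push_neg at hE
    obtain ⟨v, hvA, hvbig⟩ := hE
    have hvbig : C + 1 ≤ (compIn G Sᶜ v).card := hvbig
    set K := compIn G Sᶜ v with hKdef
    have hvK : v ∈ K := mem_compIn.mpr (GReach.refl hvA)
    have Kconn : ∀ x ∈ K, ∀ y ∈ K, GReach G K x y := compIn_conn
    have hKA : K ⊆ Sᶜ := compIn_subset
    have hKuniq : PathUnique G K := hP.mono hKA
    obtain ⟨w, hwK, hDcard, hii⟩ :=
      tree_lemma C K.card K le_rfl Kconn hKuniq hvbig v hvK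
    have hwS : w ∉ S := Finset.mem_compl.mp (hKA hwK)
    have hA' : (insert w S)ᶜ = Sᶜ.erase w := by
      rw [Finset.compl_insert]
    -- every vertex of K is big for S
    have hKbig : K ⊆ bigS G C Sᶜ := by
      intro x hxK
      have hx : GReach G Sᶜ v x := mem_compIn.mp hxK
      refine mem_bigS.mpr ⟨hKA hxK, ?_⟩
      rw [← compIn_eq_of_reach hx]
      exact hvbig
    -- components after removing w of vertices of K stay inside K
    have hL : ∀ x ∈ K, compIn G (Sᶜ.erase w) x = compIn G (K.erase w) x := by
      intro x hxK
      refine Finset.Subset.antisymm ?_ (compIn_mono (Finset.erase_subset_erase _ hKA) x)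
      intro y hy
      obtain ⟨p, hp⟩ := mem_compIn.mp hy
      have hKx : compIn G Sᶜ x = K := (compIn_eq_of_reach (mem_compIn.mp hxK)).symm
      have hsupK : ∀ z ∈ p.support, z ∈ K := by
        intro z hz
        have : GReach G Sᶜ x z :=
          GReach.of_mem_support (fun u hu => Finset.mem_of_mem_erase (hp u hu)) hz
        rw [← hKx]
        exact mem_compIn.mpr this
      exact mem_compIn.mpr ⟨p, fun z hz => Finset.mem_erase.mpr
        ⟨(Finset.mem_erase.mp (hp z hz)).1, hsupK z hz⟩⟩
    set D := sep G K w v with hDdef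
    have hDbig : D ⊆ bigS G C Sᶜ := fun x hx => hKbig (mem_sep.mp hx).1
    have hsub : bigS G C (Sᶜ.erase w) ⊆ bigS G C Sᶜ \ D := by
      intro x hx
      obtain ⟨hxA', hxbig'⟩ := mem_bigS.mp hx
      rw [Finset.mem_sdiff]
      constructor
      · refine mem_bigS.mpr ⟨Finset.mem_of_mem_erase hxA', ?_⟩
        exact le_trans hxbig' (Finset.card_le_card (compIn_mono (Finset.erase_subset _ _) x))
      · intro hxD
        obtain ⟨hxK, hnr⟩ := mem_sep.mp hxD
        have hxw : x ≠ w := (Finset.mem_erase.mp hxA').1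
        have := hii x hxK hnr hxw
        rw [← hL x hxK] at this
        omega
    have hcards : (bigS G C (Sᶜ.erase w)).card + (C + 1) ≤ (bigS G C Sᶜ).card := by
      have h1 : (bigS G C (Sᶜ.erase w)).card ≤ (bigS G C Sᶜ \ D).card :=
        Finset.card_le_card hsub
      have h2 : (bigS G C Sᶜ \ D).card = (bigS G C Sᶜ).card - D.card :=
        Finset.card_sdiff_of_subset hDbig
      have h3 : D.card ≤ (bigS G C Sᶜ).card := Finset.card_le_card hDbig
      omega
    have hm' : (bigS G C (insert w S)ᶜ).card ≤ m := by
      rw [hA']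
      omega
    have hP' : PathUnique G (insert w S)ᶜ := by
      rw [hA']
      exact hP.mono (Finset.erase_subset _ _)
    obtain ⟨T, hST', hsmall, hcount⟩ := ih (insert w S) hP' hm'
    refine ⟨T, (Finset.subset_insert w S).trans hST', hsmall, ?_⟩
    have hS'card : (insert w S).card = S.card + 1 := Finset.card_insert_of_notMem hwS
    have hTS' : (insert w S).card ≤ T.card := Finset.card_le_card hST'
    have hsplit : T.card - S.card = (T.card - (insert w S).card) + 1 := by omega
    rw [hsplit, Nat.mul_add, Nat.mul_one]
    rw [hA'] at hcount
    omega

end Aux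

/-- any decycling set `S₀` of a graph on `N` vertices can be extended
to a `C`-dismantling set `S` with `(C+1)·(|S| − |S₀|) ≤ N`. -/
theorem decycling_extends_to_dismantling {V : Type*} [Fintype V] [DecidableEq V]
    (G : SimpleGraph V) (C : ℕ) (hC : 1 ≤ C)
    (S₀ : Finset V) (h₀ : (G.induce ((↑S₀ : Set V)ᶜ)).IsAcyclic) :
    ∃ S : Finset V, S₀ ⊆ S ∧
      (∀ c : (G.induce ((↑S : Set V)ᶜ)).ConnectedComponent, c.supp.ncard ≤ C) ∧
      (C + 1) * (S.card - S₀.card) ≤ Fintype.card V := by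
  have hP : PathUnique G S₀ᶜ := by
    apply pathUnique_of_acyclic
    rw [Finset.coe_compl]
    exact h₀
  obtain ⟨T, hsub, hsmall, hcount⟩ := main_lemma C hC (bigS G C S₀ᶜ).card S₀ hP le_rfl
  refine ⟨T, hsub, ?_, ?_⟩
  · intro c
    obtain ⟨x, hx, heq⟩ := supp_ncard_eq T c
    rw [heq]
    exact hsmall x hx
  · refine le_trans hcount (le_trans (Finset.card_le_card (Finset.subset_univ _)) ?_)
    rw [Finset.card_univ]
end

section
/- Let G be a d-regular finite simple graph on N vertices (every vertex has degree d), and let S be a decycling set of G with S ≠ V. Then 2(d−1)·|S| ≥ N(d−2) + 2. In particular, for d ≥ 3 the decycling number of G is at least N·(d−2)/(2(d−1)). -/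
open SimpleGraph Finset

lemma acyclic_card_edge_bound {V : Type*} [Fintype V] [Nonempty V]
    (G : SimpleGraph V) [Fintype G.edgeSet] (h : G.IsAcyclic) :
    G.edgeFinset.card + 1 ≤ Fintype.card V := by
  classical
  set root : V → V := fun v => (G.connectedComponentMk v).out with hroot_def
  have hmk : ∀ v, G.connectedComponentMk (root v) = G.connectedComponentMk v :=
    fun v => Quot.out_eq _
  have hreach : ∀ v, G.Reachable v (root v) := fun v =>
    (SimpleGraph.ConnectedComponent.exact (hmk v)).symm
  have hrootroot : ∀ v, root (root v) = root v := by
    intro v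
    show (G.connectedComponentMk (root v)).out = (G.connectedComponentMk v).out
    rw [hmk]
  set p : ∀ v, G.Path v (root v) := fun v => (hreach v).some.toPath with hp_def
  have hne : ∀ v, ¬ (p v).1.Nil → v ≠ root v := by
    intro v hv hveq
    apply hv
    have hq : ((p v).1.copy rfl hveq.symm).IsPath := ((SimpleGraph.Walk.isPath_copy _ rfl hveq.symm).mpr (p v).2)
    rw [SimpleGraph.Walk.isPath_iff_eq_nil] at hq
    have : ((p v).1.copy rfl hveq.symm).Nil := by rw [hq]; exact SimpleGraph.Walk.nil_nil
    simpa using this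
  set NR : Finset V := Finset.univ.filter (fun v => v ≠ root v) with hNR_def
  have hNRcard : NR.card + 1 ≤ Fintype.card V := by
    have hmem : root (Classical.arbitrary V) ∉ NR := by
      simp [hNR_def, hrootroot]
    calc NR.card + 1 = (insert (root (Classical.arbitrary V)) NR).card :=
          (Finset.card_insert_of_notMem hmem).symm
      _ ≤ Fintype.card V := Finset.card_le_univ _
  set g : V → Sym2 V := fun x =>
    if hx : (p x).1.Nil then s(x, x) else ((p x).1.firstDart hx).edge with hg_def
  have hsurj : ∀ e ∈ G.edgeFinset, ∃ x ∈ NR, g x = e := by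
    intro e he
    rw [SimpleGraph.mem_edgeFinset] at he
    induction e with
    | h a b =>
      rw [SimpleGraph.mem_edgeSet] at he
      by_cases hb : b ∈ (p a).1.support
      · -- witness a ; (p a).1 = cons he (dropUntil ...)
        have ht : ((p a).1.takeUntil b hb).IsPath := (p a).2.takeUntil hb
        have hsingle : (SimpleGraph.Walk.cons he SimpleGraph.Walk.nil).IsPath := by
          simp [he.ne]
        have := h.path_unique ⟨(p a).1.takeUntil b hb, ht⟩ ⟨_, hsingle⟩
        have htake : (p a).1.takeUntil b hb = SimpleGraph.Walk.cons he SimpleGraph.Walk.nil :=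
          congrArg Subtype.val this
        have hpa : (p a).1 = SimpleGraph.Walk.cons he ((p a).1.dropUntil b hb) := by
          conv_lhs => rw [← (p a).1.take_spec hb]
          rw [htake]
          simp
        have hnil : ¬ (p a).1.Nil := by rw [hpa]; exact SimpleGraph.Walk.not_nil_cons
        refine ⟨a, ?_, ?_⟩
        · simp [hNR_def, hne a hnil]
        · show (if hx : ((p a).1).Nil then s(a, a) else (((p a).1).firstDart hx).edge) = s(a, b)
          rw [dif_neg hnil, SimpleGraph.Walk.edge_firstDart, hpa]
          simp
      · -- witness b
        have hr : root a = root b := by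
          show (G.connectedComponentMk a).out = (G.connectedComponentMk b).out
          rw [SimpleGraph.ConnectedComponent.connectedComponentMk_eq_of_adj he]
        have hq : ((SimpleGraph.Walk.cons he.symm (p a).1).copy rfl hr).IsPath :=
          (SimpleGraph.Walk.isPath_copy _ rfl hr).mpr (SimpleGraph.Walk.IsPath.cons (p a).2 hb)
        have := h.path_unique (p b) ⟨_, hq⟩
        have hpb : (p b).1 = (SimpleGraph.Walk.cons he.symm (p a).1).copy rfl hr :=
          congrArg Subtype.val this
        have hnil : ¬ (p b).1.Nil := by rw [hpb]; simp
        refine ⟨b, ?_, ?_⟩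
        · simp [hNR_def, hne b hnil]
        · show (if hx : ((p b).1).Nil then s(b, b) else (((p b).1).firstDart hx).edge) = s(a, b)
          rw [dif_neg hnil, SimpleGraph.Walk.edge_firstDart, hpb]
          simp [Sym2.eq_swap]
  have : G.edgeFinset.card ≤ NR.card := by
    apply Finset.card_le_card_of_surjOn g
    intro e he
    obtain ⟨x, hx, hgx⟩ := hsurj e (by simpa using he)
    exact ⟨x, by simpa using hx, hgx⟩
  omega

/-- if `G` is `d`-regular on `N` vertices and `S ≠ V` is a decycling set,
then `2(d−1)·|S| ≥ N(d−2) + 2`. -/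
theorem decycling_regular_lower_bound {V : Type*} [Fintype V]
    (G : SimpleGraph V) [DecidableRel G.Adj] (d : ℕ)
    (hreg : G.IsRegularOfDegree d)
    (S : Finset V) (hS : S ≠ Finset.univ)
    (hdec : (G.induce ((↑S : Set V)ᶜ)).IsAcyclic) :
    (Fintype.card V : ℤ) * ((d : ℤ) - 2) + 2 ≤ 2 * ((d : ℤ) - 1) * (S.card : ℤ) := by
  classical
  set T : Set V := (↑S : Set V)ᶜ with hT_def
  obtain ⟨v₀, hv₀⟩ : ∃ v, v ∉ S := by
    by_contra hc; push_neg at hc; exact hS (Finset.eq_univ_iff_forall.mpr hc)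
  haveI : Nonempty ↥T := ⟨⟨v₀, by simp [hT_def, hv₀]⟩⟩
  haveI : DecidableRel (G.induce T).Adj := fun a b => inferInstanceAs (Decidable (G.Adj a b))
  -- card of T
  have hcardT : Fintype.card ↥T = Sᶜ.card := by
    rw [Fintype.card_congr (Equiv.subtypeEquivRight (fun x => by simp [hT_def] : ∀ x, x ∈ T ↔ x ∈ Sᶜ))]
    exact Fintype.card_coe _
  -- degrees in induced graph
  have hdeg : ∀ v : ↥T, (G.induce T).degree v = (Sᶜ.filter (fun w => G.Adj ↑v w)).card := by
    intro v
    rw [← SimpleGraph.card_neighborSet_eq_degree]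
    have e1 : (G.induce T).neighborSet v ≃ {w : V // w ∈ T ∧ G.Adj ↑v w} :=
      Equiv.subtypeSubtypeEquivSubtypeInter (fun w => w ∈ T) (fun w => G.Adj ↑v w)
    rw [Fintype.card_congr e1, Fintype.card_subtype]
    congr 1
    ext w
    simp [hT_def]
  -- degree split
  have hsplit : ∀ v : V, (Sᶜ.filter (fun w => G.Adj v w)).card
      + (S.filter (fun w => G.Adj v w)).card = d := by
    intro v
    have hdisj : Disjoint (Sᶜ.filter (fun w => G.Adj v w)) (S.filter (fun w => G.Adj v w)) :=
      Finset.disjoint_filter_filter (disjoint_compl_left)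
    have hun : Sᶜ ∪ S = Finset.univ := by ext x; by_cases hx : x ∈ S <;> simp [hx]
    rw [← Finset.card_union_of_disjoint hdisj, ← Finset.filter_union, hun]
    have hnb : Finset.univ.filter (fun w => G.Adj v w) = G.neighborFinset v := by
      ext w; simp
    rw [hnb]
    exact hreg v
  -- double counting
  have hswap : ∑ v ∈ Sᶜ, (S.filter (fun w => G.Adj v w)).card
      = ∑ u ∈ S, (Sᶜ.filter (fun w => G.Adj u w)).card := by
    simp only [Finset.card_filter]
    rw [Finset.sum_comm]
    refine Finset.sum_congr rfl fun u _ => Finset.sum_congr rfl fun v _ => ?_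
    exact if_congr (G.adj_comm v u) rfl rfl
  have hbound : ∑ u ∈ S, (Sᶜ.filter (fun w => G.Adj u w)).card ≤ S.card * d := by
    calc ∑ u ∈ S, (Sᶜ.filter (fun w => G.Adj u w)).card
        ≤ ∑ _u ∈ S, d := Finset.sum_le_sum (fun u _ => Nat.le.intro (hsplit u))
      _ = S.card * d := by rw [Finset.sum_const, smul_eq_mul]
  -- edge bound
  have hedge : (G.induce T).edgeFinset.card + 1 ≤ Sᶜ.card := by
    rw [← hcardT]
    exact acyclic_card_edge_bound _ hdec
  -- total degree sums
  have hsum1 : ∑ v : ↥T, (G.induce T).degree v = 2 * (G.induce T).edgeFinset.card :=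
    SimpleGraph.sum_degrees_eq_twice_card_edges _
  have hsum2 : ∑ v : ↥T, (G.induce T).degree v
      = ∑ v ∈ Sᶜ, (Sᶜ.filter (fun w => G.Adj v w)).card := by
    rw [Finset.sum_congr rfl (fun v _ => hdeg v)]
    exact (Finset.sum_subtype Sᶜ (fun x => by simp [hT_def])
      (fun v => (Sᶜ.filter (fun w => G.Adj v w)).card)).symm
  have htot : ∑ v ∈ Sᶜ, ((Sᶜ.filter (fun w => G.Adj v w)).card
      + (S.filter (fun w => G.Adj v w)).card) = Sᶜ.card * d := by
    rw [Finset.sum_congr rfl (fun v _ => hsplit v), Finset.sum_const, smul_eq_mul]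
  rw [Finset.sum_add_distrib, ← hsum2, hsum1, hswap] at htot
  have hkey : Sᶜ.card * d + 2 ≤ 2 * Sᶜ.card + S.card * d := by omega
  have hts : S.card + Sᶜ.card = Fintype.card V := Finset.card_add_card_compl S
  have hN : (Fintype.card V : ℤ) = (Sᶜ.card : ℤ) + S.card := by exact_mod_cast (by omega : Fintype.card V = Sᶜ.card + S.card)
  have hZ : (Sᶜ.card : ℤ) * d + 2 ≤ 2 * Sᶜ.card + S.card * d := by exact_mod_cast hkey
  rw [hN]
  nlinarith [hZ]
end

section
/- Let G be a finite simple graph on vertex set V and let c ≥ 2 be an integer. Let G' be the graph obtained from G by attaching c−1 new pendant leaves to each vertex. If W ⊆ V is a vertex cover of G, then every connected component of G'∖(inl '' W) has at most c vertices; i.e., the copy of W inside G' is a c-dismantling set of G'. -/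
/-- The graph obtained from `G` by attaching `c-1` new pendant leaves to each vertex. -/
def addLeaves {V : Type*} (G : SimpleGraph V) (c : ℕ) :
    SimpleGraph (V ⊕ V × Fin (c - 1)) :=
  SimpleGraph.fromRel (fun x y =>
    match x, y with
    | Sum.inl u, Sum.inl v => G.Adj u v
    | Sum.inl v, Sum.inr (w, _) => v = w
    | _, _ => False)

private lemma closed_reach {α : Type*} (H : SimpleGraph α) (T : Set α)
    (hT : ∀ a b, H.Adj a b → a ∈ T → b ∈ T) {x y : α}
    (h : H.Reachable x y) (hx : x ∈ T) : y ∈ T := by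
  obtain ⟨p⟩ := h
  induction p with
  | nil => exact hx
  | cons h p ih => exact ih (hT _ _ h hx)

/-- if `W` is a vertex cover of `G`, then the copy of `W` inside `G'`
(the graph with `c-1` pendant leaves attached to each vertex) is a `c`-dismantling set
of `G'`. -/
theorem vertexCover_gives_dismantling {V : Type*} [Fintype V]
    (G : SimpleGraph V) (c : ℕ) (hc : 2 ≤ c)
    (W : Set V) (hW : ∀ u v : V, G.Adj u v → u ∈ W ∨ v ∈ W) :
    ∀ comp : ((addLeaves G c).induce ((Sum.inl '' W)ᶜ :
        Set (V ⊕ V × Fin (c - 1)))).ConnectedComponent,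
      comp.supp.ncard ≤ c := by
  set S : Set (V ⊕ V × Fin (c - 1)) := (Sum.inl '' W)ᶜ with hS
  set H := (addLeaves G c).induce S with hH
  intro comp
  induction comp using SimpleGraph.ConnectedComponent.ind with
  | _ x =>
  obtain ⟨x, hx⟩ := x
  -- helper: membership in S
  have hmemS : ∀ z : V ⊕ V × Fin (c-1), z ∈ S ↔ ∀ w ∈ W, z ≠ Sum.inl w := by
    intro z
    simp only [hS, Set.mem_compl_iff, Set.mem_image, not_exists, not_and]
    constructor
    · intro h w hw he; exact h w hw he.symm
    · intro h w hw he; exact h w hw he.symm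
  -- unfold adjacency
  have hadj : ∀ a b : S, H.Adj a b → (addLeaves G c).Adj a.1 b.1 := by
    intro a b h; exact h
  -- main case split
  rcases x with v | ⟨w, i⟩
  · -- x = inl v, v ∉ W
    have hvW : v ∉ W := by
      intro h; exact hx ⟨v, h, rfl⟩
    set T : Set S := {y | y.1 = Sum.inl v ∨ ∃ i, y.1 = Sum.inr (v, i)} with hT
    have hclosed : ∀ a b : S, H.Adj a b → a ∈ T → b ∈ T := by
      rintro ⟨a, ha⟩ ⟨b, hb⟩ hab (h1 | ⟨j, h2⟩)
      · simp only at h1; subst h1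
        have := hadj _ _ hab
        simp only [addLeaves, SimpleGraph.fromRel_adj] at this
        obtain ⟨hne, hr⟩ := this
        rcases b with u | ⟨u, k⟩
        · -- inl u adjacent to inl v : G.Adj, so u ∈ W, contradiction
          have hGuv : G.Adj v u := by
            rcases hr with h | h
            · exact h
            · exact h.symm
          rcases hW v u hGuv with h | h
          · exact absurd h hvW
          · exact absurd ⟨u, h, rfl⟩ hb
        · -- inr (u,k) : must be u = v
          have : v = u := by
            rcases hr with h | h
            · exact h
            · exact h.elim
          subst this
          exact Or.inr ⟨k, rfl⟩
      · simp only at h2; subst h2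
        have := hadj _ _ hab
        simp only [addLeaves, SimpleGraph.fromRel_adj] at this
        obtain ⟨hne, hr⟩ := this
        rcases b with u | ⟨u, k⟩
        · have : u = v := by
            rcases hr with h | h
            · exact h.elim
            · exact h
          subst this
          exact Or.inl rfl
        · rcases hr with h | h <;> exact h.elim
    have hsub : (H.connectedComponentMk ⟨Sum.inl v, hx⟩).supp ⊆ T := by
      intro y hy
      rw [SimpleGraph.ConnectedComponent.mem_supp_iff, SimpleGraph.ConnectedComponent.eq] at hy
      exact closed_reach H T hclosed hy.symm (Or.inl rfl)
    -- bound ncard of T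
    have hleaf : ∀ i : Fin (c-1), (Sum.inr (v, i) : V ⊕ V × Fin (c-1)) ∈ S := by
      intro i
      rw [hmemS]; intro w hw; simp
    set g : Option (Fin (c-1)) → S := fun o =>
      match o with
      | none => ⟨Sum.inl v, hx⟩
      | some i => ⟨Sum.inr (v, i), hleaf i⟩ with hg
    have hTsub : T ⊆ Set.range g := by
      rintro ⟨y, hy⟩ (h1 | ⟨j, h2⟩)
      · exact ⟨none, Subtype.ext h1.symm⟩
      · exact ⟨some j, Subtype.ext h2.symm⟩
    calc (H.connectedComponentMk ⟨Sum.inl v, hx⟩).supp.ncard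
        ≤ T.ncard := Set.ncard_le_ncard hsub ((Set.finite_range g).subset hTsub)
      _ ≤ (Set.range g).ncard := Set.ncard_le_ncard hTsub (Set.finite_range g)
      _ ≤ Fintype.card (Option (Fin (c-1))) := by
          rw [← Set.image_univ]
          calc (g '' Set.univ).ncard ≤ Set.univ.ncard := Set.ncard_image_le Set.finite_univ
            _ = Fintype.card (Option (Fin (c-1))) := by
                rw [Set.ncard_univ, Nat.card_eq_fintype_card]
      _ = c := by simp; omega
  · -- x = inr (w, i)
    by_cases hw : w ∈ W
    · -- isolated vertex
      have hiso : ∀ b : S, ¬ H.Adj ⟨Sum.inr (w,i), hx⟩ b := by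
        rintro ⟨b, hb⟩ hab
        have := hadj _ _ hab
        simp only [addLeaves, SimpleGraph.fromRel_adj] at this
        obtain ⟨hne, hr⟩ := this
        rcases b with u | ⟨u, k⟩
        · have : u = w := by
            rcases hr with h | h
            · exact h.elim
            · exact h
          subst this
          exact hb ⟨u, hw, rfl⟩
        · rcases hr with h | h <;> exact h.elim
      have hsub : (H.connectedComponentMk ⟨Sum.inr (w,i), hx⟩).supp ⊆
          {⟨Sum.inr (w,i), hx⟩} := by
        intro y hy
        rw [SimpleGraph.ConnectedComponent.mem_supp_iff, SimpleGraph.ConnectedComponent.eq] at hy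
        have hy' := hy.symm
        obtain ⟨p⟩ := hy'
        cases p with
        | nil => exact rfl
        | cons h p => exact absurd h (hiso _)
      calc (H.connectedComponentMk ⟨Sum.inr (w,i), hx⟩).supp.ncard
          ≤ ({⟨Sum.inr (w,i), hx⟩} : Set S).ncard :=
            Set.ncard_le_ncard hsub (Set.finite_singleton _)
        _ = 1 := Set.ncard_singleton _
        _ ≤ c := by omega
    · -- w ∉ W : same T argument with v := w
      set T : Set S := {y | y.1 = Sum.inl w ∨ ∃ i, y.1 = Sum.inr (w, i)} with hT
      have hclosed : ∀ a b : S, H.Adj a b → a ∈ T → b ∈ T := by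
        rintro ⟨a, ha⟩ ⟨b, hb⟩ hab (h1 | ⟨j, h2⟩)
        · simp only at h1; subst h1
          have := hadj _ _ hab
          simp only [addLeaves, SimpleGraph.fromRel_adj] at this
          obtain ⟨hne, hr⟩ := this
          rcases b with u | ⟨u, k⟩
          · have hGuv : G.Adj w u := by
              rcases hr with h | h
              · exact h
              · exact h.symm
            rcases hW w u hGuv with h | h
            · exact absurd h hw
            · exact absurd ⟨u, h, rfl⟩ hb
          · have : w = u := by
              rcases hr with h | h
              · exact h
              · exact h.elim
            subst this
            exact Or.inr ⟨k, rfl⟩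
        · simp only at h2; subst h2
          have := hadj _ _ hab
          simp only [addLeaves, SimpleGraph.fromRel_adj] at this
          obtain ⟨hne, hr⟩ := this
          rcases b with u | ⟨u, k⟩
          · have : u = w := by
              rcases hr with h | h
              · exact h.elim
              · exact h
            subst this
            exact Or.inl rfl
          · rcases hr with h | h <;> exact h.elim
      have hsub : (H.connectedComponentMk ⟨Sum.inr (w,i), hx⟩).supp ⊆ T := by
        intro y hy
        rw [SimpleGraph.ConnectedComponent.mem_supp_iff, SimpleGraph.ConnectedComponent.eq] at hy
        exact closed_reach H T hclosed hy.symm (Or.inr ⟨i, rfl⟩)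
      have hwS : (Sum.inl w : V ⊕ V × Fin (c-1)) ∈ S := by
        rw [hmemS]; intro u hu he
        cases he; exact hw hu
      have hleaf : ∀ j : Fin (c-1), (Sum.inr (w, j) : V ⊕ V × Fin (c-1)) ∈ S := by
        intro j
        rw [hmemS]; intro u hu; simp
      set g : Option (Fin (c-1)) → S := fun o =>
        match o with
        | none => ⟨Sum.inl w, hwS⟩
        | some j => ⟨Sum.inr (w, j), hleaf j⟩ with hg
      have hTsub : T ⊆ Set.range g := by
        rintro ⟨y, hy⟩ (h1 | ⟨j, h2⟩)
        · exact ⟨none, Subtype.ext h1.symm⟩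
        · exact ⟨some j, Subtype.ext h2.symm⟩
      calc (H.connectedComponentMk ⟨Sum.inr (w,i), hx⟩).supp.ncard
          ≤ T.ncard := Set.ncard_le_ncard hsub ((Set.finite_range g).subset hTsub)
        _ ≤ (Set.range g).ncard := Set.ncard_le_ncard hTsub (Set.finite_range g)
        _ ≤ Fintype.card (Option (Fin (c-1))) := by
            rw [← Set.image_univ]
            calc (g '' Set.univ).ncard ≤ Set.univ.ncard := Set.ncard_image_le Set.finite_univ
              _ = Fintype.card (Option (Fin (c-1))) := by
                  rw [Set.ncard_univ, Nat.card_eq_fintype_card]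
        _ = c := by simp; omega
end

section
/- Let G be a finite simple graph on vertex set V and let c ≥ 2 be an integer. Let G' be the graph obtained from G by attaching c−1 new pendant leaves to each vertex, and let π : V' → V be the projection sending each vertex of V to itself and each leaf attached to v to v. If S ⊆ V' is a set such that every connected component of G'∖S has fewer than 2c vertices, then W = π(S) is a vertex cover of G with |W| ≤ |S|. -/
/-- if every connected component of `G' ∖ S` has fewer than `2c` vertices,
then the projection `W = π(S)` is a vertex cover of `G` with `|W| ≤ |S|`. -/
theorem dismantling_projects_to_vertexCover {V : Type*} [Fintype V]
    (G : SimpleGraph V) (c : ℕ) (hc : 2 ≤ c)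
    (S : Set (V ⊕ V × Fin (c - 1)))
    (hS : ∀ comp : ((addLeaves G c).induce (Sᶜ :
        Set (V ⊕ V × Fin (c - 1)))).ConnectedComponent,
      comp.supp.ncard < 2 * c) :
    (∀ u v : V, G.Adj u v →
        u ∈ Sum.elim id Prod.fst '' S ∨ v ∈ Sum.elim id Prod.fst '' S) ∧
      (Sum.elim id Prod.fst '' S).ncard ≤ S.ncard := by
  refine ⟨?_, Set.ncard_image_le S.toFinite⟩
  intro u v huv
  by_contra hcon
  push_neg at hcon
  obtain ⟨hu, hv⟩ := hcon
  have hmem : ∀ w : V, w ∉ Sum.elim id Prod.fst '' S →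
      Sum.inl w ∈ Sᶜ ∧ ∀ i : Fin (c - 1), Sum.inr (w, i) ∈ Sᶜ := by
    intro w hw
    refine ⟨fun h => hw ⟨Sum.inl w, h, rfl⟩, fun i h => hw ⟨Sum.inr (w, i), h, rfl⟩⟩
  obtain ⟨hcu, hcui⟩ := hmem u hu
  obtain ⟨hcv, hcvi⟩ := hmem v hv
  set H := (addLeaves G c).induce (Sᶜ : Set (V ⊕ V × Fin (c - 1))) with hH
  set C := H.connectedComponentMk ⟨Sum.inl u, hcu⟩ with hC
  have hadj_uv : H.Adj ⟨Sum.inl u, hcu⟩ ⟨Sum.inl v, hcv⟩ := by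
    simp [hH, addLeaves, SimpleGraph.fromRel_adj, huv, huv.ne]
  have hadj_ui : ∀ i, H.Adj ⟨Sum.inl u, hcu⟩ ⟨Sum.inr (u, i), hcui i⟩ := fun i => by
    simp [hH, addLeaves]
  have hadj_vi : ∀ i, H.Adj ⟨Sum.inl v, hcv⟩ ⟨Sum.inr (v, i), hcvi i⟩ := fun i => by
    simp [hH, addLeaves]
  have hsupp : ∀ (x) (hx : x ∈ Sᶜ), H.Reachable ⟨x, hx⟩ ⟨Sum.inl u, hcu⟩ →
      x ∈ Subtype.val '' C.supp := fun x hx h =>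
    ⟨⟨x, hx⟩, SimpleGraph.ConnectedComponent.sound h, rfl⟩
  set A : Set (V ⊕ V × Fin (c - 1)) := {Sum.inl u, Sum.inl v} with hA
  set B : Set (V ⊕ V × Fin (c - 1)) :=
    (fun i => Sum.inr (u, i)) '' Set.univ with hB
  set D : Set (V ⊕ V × Fin (c - 1)) :=
    (fun i => Sum.inr (v, i)) '' Set.univ with hD
  have hsub : A ∪ B ∪ D ⊆ Subtype.val '' C.supp := by
    rintro x (((rfl | hx) | ⟨i, -, rfl⟩) | ⟨i, -, rfl⟩)
    · exact hsupp _ hcu (SimpleGraph.Reachable.refl _)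
    · rw [Set.mem_singleton_iff] at hx
      subst hx
      exact hsupp _ hcv hadj_uv.reachable.symm
    · exact hsupp _ (hcui i) (hadj_ui i).reachable.symm
    · exact hsupp _ (hcvi i)
        ((hadj_vi i).reachable.symm.trans hadj_uv.reachable.symm)
  have hAB : Disjoint A B := by
    rw [Set.disjoint_left]; rintro x (hx | hx) ⟨i, -, rfl⟩ <;> simp_all
  have hABD : Disjoint (A ∪ B) D := by
    rw [Set.disjoint_left]
    rintro x (((hx | hx) | ⟨i, -, rfl⟩)) ⟨j, -, h⟩ <;> simp_all
  have hinjr : ∀ w : V, Function.Injective fun i : Fin (c - 1) => Sum.inr (α := V) (w, i) := by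
    intro w a b h; simpa using h
  have hcardA : A.ncard = 2 := Set.ncard_pair (by simp [huv.ne])
  have hcardB : B.ncard = c - 1 := by
    rw [hB, Set.ncard_image_of_injective _ (hinjr u), Set.ncard_univ]
    simp [Nat.card_eq_fintype_card]
  have hcardD : D.ncard = c - 1 := by
    rw [hD, Set.ncard_image_of_injective _ (hinjr v), Set.ncard_univ]
    simp [Nat.card_eq_fintype_card]
  have hcard : (A ∪ B ∪ D).ncard = 2 * c := by
    rw [Set.ncard_union_eq hABD, Set.ncard_union_eq hAB, hcardA, hcardB, hcardD]
    omega
  have hle : (A ∪ B ∪ D).ncard ≤ (Subtype.val '' C.supp).ncard :=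
    Set.ncard_le_ncard hsub (Set.toFinite _)
  rw [Set.ncard_image_of_injective _ Subtype.val_injective] at hle
  have := hS C
  omega
end

section
/- Let G be a finite simple graph on vertex set V, let c ≥ 2 and F be integers, and let c'' be an integer with c ≤ c'' < 2c. Let G' be the graph obtained from G by attaching c−1 new pendant leaves to each vertex. Then G has a vertex cover of size at most F if and only if there exists a set S of vertices of G' with |S| ≤ F such that every connected component of G'∖S has at most c'' vertices. -/
set_option linter.unusedSectionVars false
open SimpleGraph

section aux

variable {V : Type*} [Fintype V] {G : SimpleGraph V} {c : ℕ}

lemma addLeaves_adj_inl_inl {u v : V} :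
    (addLeaves G c).Adj (Sum.inl u) (Sum.inl v) ↔ G.Adj u v := by
  simp only [addLeaves, SimpleGraph.fromRel_adj]
  constructor
  · rintro ⟨-, h | h⟩
    · exact h
    · exact h.symm
  · intro h
    exact ⟨by simp [h.ne], Or.inl h⟩

lemma addLeaves_adj_inl_inr {v w : V} {i : Fin (c-1)} :
    (addLeaves G c).Adj (Sum.inl v) (Sum.inr (w, i)) ↔ v = w := by
  simp only [addLeaves, SimpleGraph.fromRel_adj]
  constructor
  · rintro ⟨-, h | h⟩
    · exact h
    · exact h.elim
  · rintro rfl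
    exact ⟨by simp, Or.inl rfl⟩

lemma addLeaves_not_adj_inr_inr {p q : V × Fin (c-1)} :
    ¬ (addLeaves G c).Adj (Sum.inr p) (Sum.inr q) := by
  simp only [addLeaves, SimpleGraph.fromRel_adj]
  rintro ⟨-, h | h⟩ <;> exact h

lemma star_eq (c : ℕ) (v : V) :
    {y : V ⊕ V × Fin (c-1) | Sum.elim id Prod.fst y = v} =
    insert (Sum.inl v) ((fun i => Sum.inr (v, i)) '' Set.univ) := by
  ext y
  rcases y with u | ⟨w, i⟩
  · simp [eq_comm]
  · constructor
    · intro h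
      simp only [Set.mem_setOf_eq, Sum.elim_inr] at h
      subst h
      exact Set.mem_insert_iff.mpr (Or.inr ⟨i, Set.mem_univ i, rfl⟩)
    · rintro (h | ⟨j, -, h⟩)
      · simp at h
      · simp only [Sum.inr.injEq, Prod.mk.injEq] at h
        simp [← h.1]

lemma star_ncard (hc : 1 ≤ c) (v : V) :
    {y : V ⊕ V × Fin (c-1) | Sum.elim id Prod.fst y = v}.ncard = c := by
  rw [star_eq]
  rw [Set.ncard_insert_of_notMem (by simp)
    ((Set.finite_univ).image _)]
  rw [Set.ncard_image_of_injective _ (fun a b h => by simpa using h)]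
  rw [Set.ncard_univ]
  simp only [Nat.card_eq_fintype_card, Fintype.card_fin]
  omega

end aux

/-- for `c ≤ c'' < 2c`, `G` has a vertex cover of size at most `F` iff
`G'` (the graph with `c-1` pendant leaves attached to each vertex of `G`) has a
`c''`-dismantling set of size at most `F`. -/
theorem vertexCover_iff_dismantling {V : Type*} [Fintype V]
    (G : SimpleGraph V) (c c'' F : ℕ) (hc : 2 ≤ c)
    (h1 : c ≤ c'') (h2 : c'' < 2 * c) :
    (∃ W : Set V, (∀ u v : V, G.Adj u v → u ∈ W ∨ v ∈ W) ∧ W.ncard ≤ F) ↔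
    (∃ S : Set (V ⊕ V × Fin (c - 1)), S.ncard ≤ F ∧
      ∀ comp : ((addLeaves G c).induce (Sᶜ :
          Set (V ⊕ V × Fin (c - 1)))).ConnectedComponent,
        comp.supp.ncard ≤ c'') := by
  constructor
  · rintro ⟨W, hW, hWF⟩
    refine ⟨Sum.inl '' W, by
      rwa [Set.ncard_image_of_injective _ Sum.inl_injective], ?_⟩
    set S : Set (V ⊕ V × Fin (c-1)) := Sum.inl '' W with hS
    intro comp
    have key : ∀ a b : ↥(Sᶜ), ((addLeaves G c).induce Sᶜ).Adj a b →
        Sum.elim id Prod.fst (a : V ⊕ V × Fin (c-1)) =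
        Sum.elim id Prod.fst (b : V ⊕ V × Fin (c-1)) := by
      rintro ⟨a, ha⟩ ⟨b, hb⟩ hadj
      simp only [comap_adj, Function.Embedding.coe_subtype] at hadj
      rcases a with u | ⟨w, i⟩ <;> rcases b with u' | ⟨w', i'⟩
      · rw [addLeaves_adj_inl_inl] at hadj
        rcases hW _ _ hadj with h | h
        · exact absurd ⟨u, h, rfl⟩ ha
        · exact absurd ⟨u', h, rfl⟩ hb
      · rw [addLeaves_adj_inl_inr] at hadj
        simpa using hadj
      · rw [(addLeaves G c).adj_comm, addLeaves_adj_inl_inr] at hadj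
        simpa using hadj.symm
      · exact absurd hadj addLeaves_not_adj_inr_inr
    obtain ⟨x, hx⟩ := comp.exists_rep
    have hsub : comp.supp ⊆ Subtype.val ⁻¹'
        {y | Sum.elim id Prod.fst y = Sum.elim id Prod.fst (x : V ⊕ V × Fin (c-1))} := by
      intro y hy
      have keyR : ∀ a b : ↥(Sᶜ), ((addLeaves G c).induce Sᶜ).Walk a b →
          Sum.elim id Prod.fst (a : V ⊕ V × Fin (c-1)) =
          Sum.elim id Prod.fst (b : V ⊕ V × Fin (c-1)) := by
        intro a b p
        induction p with
        | nil => rfl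
        | cons h _ ih => exact (key _ _ h).trans ih
      rw [ConnectedComponent.mem_supp_iff, ← hx] at hy
      obtain ⟨p⟩ := (ConnectedComponent.eq (G := (addLeaves G c).induce Sᶜ)).mp hy
      exact keyR _ _ p
    calc comp.supp.ncard ≤ (Subtype.val ⁻¹'
        {y | Sum.elim id Prod.fst y =
          Sum.elim id Prod.fst (x : V ⊕ V × Fin (c-1))} : Set ↥(Sᶜ)).ncard :=
          Set.ncard_le_ncard hsub (Set.toFinite _)
      _ = (Subtype.val '' (Subtype.val ⁻¹'
        {y | Sum.elim id Prod.fst y =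
          Sum.elim id Prod.fst (x : V ⊕ V × Fin (c-1))})).ncard :=
          (Set.ncard_image_of_injective _ Subtype.val_injective).symm
      _ ≤ {y | Sum.elim id Prod.fst y =
          Sum.elim id Prod.fst (x : V ⊕ V × Fin (c-1))}.ncard :=
          Set.ncard_le_ncard (Set.image_preimage_subset _ _) (Set.toFinite _)
      _ = c := star_ncard (by omega) _
      _ ≤ c'' := h1
  · rintro ⟨S, hSF, hcomp⟩
    refine ⟨Sum.elim id Prod.fst '' S, ?_, le_trans (Set.ncard_image_le (Set.toFinite _)) hSF⟩
    intro u v huv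
    by_contra hW
    push_neg at hW
    obtain ⟨hu, hv⟩ := hW
    -- all star vertices of u and v avoid S
    have hstar : ∀ y : V ⊕ V × Fin (c-1),
        (Sum.elim id Prod.fst y = u ∨ Sum.elim id Prod.fst y = v) → y ∈ Sᶜ := by
      intro y hy hyS
      rcases hy with h | h
      · exact hu ⟨y, hyS, h⟩
      · exact hv ⟨y, hyS, h⟩
    have hu' : (Sum.inl u : V ⊕ V × Fin (c-1)) ∈ Sᶜ := hstar _ (Or.inl rfl)
    have hv' : (Sum.inl v : V ⊕ V × Fin (c-1)) ∈ Sᶜ := hstar _ (Or.inr rfl)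
    set H := (addLeaves G c).induce (Sᶜ : Set (V ⊕ V × Fin (c-1))) with hH
    have hadjH : ∀ (a b : V ⊕ V × Fin (c-1)) (ha : a ∈ Sᶜ) (hb : b ∈ Sᶜ),
        (addLeaves G c).Adj a b → H.Adj ⟨a, ha⟩ ⟨b, hb⟩ := by
      intro a b ha hb h
      simpa [hH, comap_adj] using h
    have huv' : H.Adj ⟨_, hu'⟩ ⟨_, hv'⟩ :=
      hadjH _ _ hu' hv' (addLeaves_adj_inl_inl.mpr huv)
    set comp := H.connectedComponentMk ⟨_, hu'⟩ with hcompdef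
    have hsub : {y | Sum.elim id Prod.fst y = u} ∪ {y | Sum.elim id Prod.fst y = v}
        ⊆ Subtype.val '' comp.supp := by
      rintro y (hy | hy)
      · refine ⟨⟨y, hstar y (Or.inl hy)⟩, ?_, rfl⟩
        rw [ConnectedComponent.mem_supp_iff, hcompdef, ConnectedComponent.eq]
        rcases y with w | ⟨w, i⟩
        · simp only [Set.mem_setOf_eq, Sum.elim_inl] at hy
          subst hy; rfl
        · simp only [Set.mem_setOf_eq, Sum.elim_inr] at hy
          subst hy
          exact (hadjH _ _ _ hu' ((addLeaves_adj_inl_inr.mpr rfl).symm)).reachable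
      · refine ⟨⟨y, hstar y (Or.inr hy)⟩, ?_, rfl⟩
        rw [ConnectedComponent.mem_supp_iff, hcompdef, ConnectedComponent.eq]
        rcases y with w | ⟨w, i⟩
        · simp only [Set.mem_setOf_eq, Sum.elim_inl] at hy
          subst hy
          exact huv'.symm.reachable
        · simp only [Set.mem_setOf_eq, Sum.elim_inr] at hy
          subst hy
          refine Reachable.trans ?_ huv'.symm.reachable
          exact (hadjH _ _ _ hv' ((addLeaves_adj_inl_inr.mpr rfl).symm)).reachable
    have hdisj : Disjoint {y : V ⊕ V × Fin (c-1) | Sum.elim id Prod.fst y = u}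
        {y | Sum.elim id Prod.fst y = v} := by
      rw [Set.disjoint_left]
      rintro y hy1 hy2
      exact huv.ne (hy1.symm.trans hy2)
    have hcard : ({y : V ⊕ V × Fin (c-1) | Sum.elim id Prod.fst y = u} ∪
        {y | Sum.elim id Prod.fst y = v}).ncard = 2 * c := by
      rw [Set.ncard_union_eq hdisj (Set.toFinite _) (Set.toFinite _),
        star_ncard (by omega), star_ncard (by omega)]
      ring
    have : 2 * c ≤ comp.supp.ncard := by
      calc 2 * c = _ := hcard.symm
        _ ≤ (Subtype.val '' comp.supp).ncard := Set.ncard_le_ncard hsub (Set.toFinite _)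
        _ = comp.supp.ncard := Set.ncard_image_of_injective _ Subtype.val_injective
    have := hcomp comp
    omega
end

section
/- Let G be a finite simple graph on vertex set V with |V| = N, let S ⊆ V, and define the parallel leaf-removal dynamics x : ℕ → V → Bool by x⁰_i = true if i ∈ S and false otherwise, and x^{t+1}_i = true if x^t_i = true or if the number of neighbors j of i with x^t_j = false is at most 1, and x^{t+1}_i = false otherwise. Then S is a decycling set of G (i.e., G∖S contains no cycle) if and only if x^N_i = true for all vertices i. -/
open Finset SimpleGraph Walk

section aux
variable {V : Type*}

section graphLemmas
variable {G : SimpleGraph V}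

/-- In a path ending at `w`, at most one edge is incident to `w`. -/
lemma path_edge_end_unique {u w : V} {p : G.Walk u w} (hp : p.IsPath) {z z' : V}
    (h1 : s(w, z) ∈ p.edges) (h2 : s(w, z') ∈ p.edges) : z = z' := by
  induction p with
  | nil => simp at h1
  | @cons a x w h q ih =>
    rw [Walk.cons_isPath_iff] at hp
    rw [Walk.edges_cons, List.mem_cons] at h1 h2
    have key : ∀ y : V, s(w, y) = s(a, x) → (∀ e ∈ q.edges, False) ∧ y = a := by
      intro y hy
      rw [Sym2.eq_iff] at hy
      rcases hy with ⟨hwa, hyx⟩ | ⟨hwx, hya⟩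
      · exact absurd (hwa ▸ q.end_mem_support) hp.2
      · subst hwx
        have : q = Walk.nil := Walk.isPath_iff_eq_nil.mp hp.1
        subst this
        exact ⟨by simp, hya⟩
    rcases h1 with h1 | h1 <;> rcases h2 with h2 | h2
    · rw [(key z h1).2, (key z' h2).2]
    · exact absurd h2 (fun h => (key z h1).1 _ h)
    · exact absurd h1 (fun h => (key z' h2).1 _ h)
    · exact ih hp.1 h1 h2

end graphLemmas

section graphLemmas2
variable [Fintype V] [DecidableEq V] {G : SimpleGraph V} [DecidableRel G.Adj]

/-- If every vertex of a nonempty finset `T` has at least two neighbors in `T`,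
then `G` contains a cycle with support inside `T`. -/
lemma exists_cycle_of_min_degree_two {T : Finset V} (hT : T.Nonempty)
    (hdeg : ∀ v ∈ T, 2 ≤ ((G.neighborFinset v).filter (· ∈ T)).card) :
    ∃ (v : V) (c : G.Walk v v), c.IsCycle ∧ ∀ x ∈ c.support, x ∈ T := by
  by_contra hnc
  push_neg at hnc
  have key : ∀ n : ℕ, ∃ (u w : V) (p : G.Walk u w),
      p.IsPath ∧ (∀ x ∈ p.support, x ∈ T) ∧ p.length = n := by
    intro n
    induction n with
    | zero =>
      obtain ⟨v, hv⟩ := hT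
      exact ⟨v, v, Walk.nil, by simp, by simpa using hv, rfl⟩
    | succ n ih =>
      obtain ⟨u, w, p, hp, hsupp, hlen⟩ := ih
      have hw : w ∈ T := hsupp w p.end_mem_support
      obtain ⟨z1, hz1, z2, hz2, hne⟩ := Finset.one_lt_card.mp (hdeg w hw)
      rw [Finset.mem_filter, SimpleGraph.mem_neighborFinset] at hz1 hz2
      -- if some neighbor is outside the support, extend the path
      by_cases hout : ∃ z : V, G.Adj w z ∧ z ∈ T ∧ z ∉ p.support
      · obtain ⟨z, hadj, hzT, hzs⟩ := hout
        refine ⟨u, z, p.concat hadj, ?_, ?_, by simp [Walk.length_concat, hlen]⟩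
        · rw [← Walk.isPath_reverse_iff, Walk.reverse_concat, Walk.cons_isPath_iff]
          exact ⟨hp.reverse, by simpa using hzs⟩
        · intro x hx
          rw [Walk.support_concat, List.mem_append] at hx
          rcases hx with hx | hx
          · exact hsupp x hx
          · simp only [List.mem_singleton] at hx; exact hx ▸ hzT
      push_neg at hout
      -- otherwise both neighbors in the support; one gives a cycle
      exfalso
      have hzs1 : z1 ∈ p.support := hout z1 hz1.1 hz1.2
      have hzs2 : z2 ∈ p.support := hout z2 hz2.1 hz2.2
      have pick : ∃ z : V, G.Adj w z ∧ z ∈ p.support ∧ s(w, z) ∉ p.edges := by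
        by_cases h1 : s(w, z1) ∈ p.edges
        · refine ⟨z2, hz2.1, hzs2, fun h2 => hne (path_edge_end_unique hp h1 h2)⟩
        · exact ⟨z1, hz1.1, hzs1, h1⟩
      obtain ⟨z, hadj, hzs, hze⟩ := pick
      set q : G.Walk z w := p.dropUntil z hzs with hq
      have hcyc : (Walk.cons hadj q).IsCycle := by
        rw [Walk.cons_isCycle_iff]
        exact ⟨hp.dropUntil hzs, fun h => hze (Walk.edges_dropUntil_subset p hzs h)⟩
      obtain ⟨x, hx, hxT⟩ := hnc w (Walk.cons hadj q) hcyc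
      refine hxT ?_
      rw [Walk.support_cons, List.mem_cons] at hx
      rcases hx with rfl | hx
      · exact hw
      · exact hsupp x (Walk.support_dropUntil_subset p hzs hx)
  obtain ⟨u, w, p, hp, _, hlen⟩ := key (Fintype.card V)
  exact absurd hp.length_lt (by omega)

end graphLemmas2

section graphLemmas3
variable {G : SimpleGraph V}

/-- Every vertex on a cycle has two distinct neighbors on the cycle. -/
lemma cycle_two_neighbors [DecidableEq V] {v u : V} {c : G.Walk v v} (hc : c.IsCycle)
    (hu : u ∈ c.support) :
    ∃ a b : V, a ≠ b ∧ G.Adj u a ∧ G.Adj u b ∧ a ∈ c.support ∧ b ∈ c.support := by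
  have hsub : ∀ x, x ∈ (c.rotate u hu).support → x ∈ c.support := by
    intro x hx
    rw [Walk.support_eq_cons (c.rotate u hu), List.mem_cons] at hx
    rcases hx with rfl | hx
    · exact hu
    · rw [Walk.support_eq_cons c]
      exact List.mem_cons_of_mem _ ((Walk.support_rotate c u hu).mem_iff.mp hx)
  have hc' : (c.rotate u hu).IsCycle := hc.rotate hu
  set c' := c.rotate u hu with hc'def
  obtain ⟨w, h', q, hcc⟩ := (Walk.not_nil_iff).mp hc'.not_nil
  rw [hcc] at hc'
  rw [Walk.cons_isCycle_iff] at hc'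
  obtain ⟨hqp, hqe⟩ := hc'
  have hwu : u ≠ w := h'.ne
  obtain ⟨z, hz, q2, hq2⟩ := Walk.exists_eq_cons_of_ne hwu q.reverse
  have hzq : z ∈ q.support := by
    have : z ∈ q.reverse.support := by rw [hq2]; simp
    rwa [Walk.support_reverse, List.mem_reverse] at this
  have hzuq : s(u, z) ∈ q.edges := by
    have : s(u, z) ∈ q.reverse.edges := by rw [hq2]; simp
    rwa [Walk.edges_reverse, List.mem_reverse] at this
  have hzw : w ≠ z := fun hwz => hqe (hwz ▸ hzuq)
  refine ⟨w, z, hzw, h', hz, ?_, ?_⟩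
  · apply hsub; rw [hcc]; simp
  · apply hsub; rw [hcc, Walk.support_cons]
    exact List.mem_cons_of_mem _ hzq

/-- The embedding of an induced subgraph into the ambient graph. -/
def induceEmb (G : SimpleGraph V) (s : Set V) : G.induce s ↪g G where
  toFun := Subtype.val
  inj' := Subtype.val_injective
  map_rel_iff' := Iff.rfl

/-- Lift a walk in `G` whose support lies in `s` to a walk in `G.induce s`. -/
def Walk.toInduce {s : Set V} : ∀ {a b : V} (p : G.Walk a b) (hp : ∀ x ∈ p.support, x ∈ s),
    (G.induce s).Walk ⟨a, hp a p.start_mem_support⟩ ⟨b, hp b p.end_mem_support⟩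
  | _, _, Walk.nil, _ => Walk.nil
  | _, _, Walk.cons h q, hp =>
    Walk.cons (by exact h) (Walk.toInduce q (fun x hx => hp x (by simp [hx])))

lemma Walk.toInduce_map {s : Set V} {a b : V} (p : G.Walk a b)
    (hp : ∀ x ∈ p.support, x ∈ s) :
    (Walk.toInduce p hp).map (induceEmb G s).toHom = p := by
  induction p with
  | nil => rfl
  | cons h q ih => rw [Walk.toInduce]; erw [Walk.map_cons, ih]; rfl

lemma induce_isAcyclic_iff {s : Set V} :
    (G.induce s).IsAcyclic ↔
      ∀ (v : V) (c : G.Walk v v), c.IsCycle → ¬ (∀ x ∈ c.support, x ∈ s) := by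
  constructor
  · intro h v c hc hsupp
    have hmap := Walk.toInduce_map c hsupp
    rw [← hmap] at hc
    exact h _ ((Walk.map_isCycle_iff_of_injective (p := Walk.toInduce c hsupp)
      (induceEmb G s).injective).mp hc)
  · intro h v c hc
    have hmap : (c.map (induceEmb G s).toHom).IsCycle :=
      hc.map (induceEmb G s).injective
    refine h v.1 (c.map (induceEmb G s).toHom) hmap ?_
    intro x hx
    erw [Walk.support_map, List.mem_map] at hx
    obtain ⟨y, _, rfl⟩ := hx
    exact y.2

end graphLemmas3

end aux

/-- Parallel leaf-removal dynamics started from the indicator of `S`: initially exactly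
the vertices of `S` are removed (`true`), and at each step an unremoved vertex becomes
removed if at most one of its neighbors is unremoved. -/
def leafRemoval {V : Type*} [Fintype V] [DecidableEq V] (G : SimpleGraph V)
    [DecidableRel G.Adj] (S : Set V) [DecidablePred (· ∈ S)] : ℕ → V → Bool
  | 0, i => decide (i ∈ S)
  | t + 1, i =>
    leafRemoval G S t i ||
      decide (((G.neighborFinset i).filter
        (fun j => leafRemoval G S t j = false)).card ≤ 1)

section dynamics
variable {V : Type*} [Fintype V] [DecidableEq V] (G : SimpleGraph V) [DecidableRel G.Adj]
  (S : Set V) [DecidablePred (· ∈ S)]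

lemma leafRemoval_succ (t : ℕ) (i : V) :
    leafRemoval G S (t + 1) i = (leafRemoval G S t i ||
      decide (((G.neighborFinset i).filter
        (fun j => leafRemoval G S t j = false)).card ≤ 1)) := rfl

lemma leafRemoval_mono {t t' : ℕ} (h : t ≤ t') {i : V}
    (hi : leafRemoval G S t i = true) : leafRemoval G S t' i = true := by
  induction t' with
  | zero => rwa [Nat.le_zero.mp h] at hi
  | succ n ih =>
    rcases Nat.le_succ_iff.mp h with h | h
    · rw [leafRemoval_succ, ih h, Bool.true_or]
    · rwa [h] at hi

lemma leafRemoval_of_mem_S {t : ℕ} {i : V} (hi : i ∈ S) :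
    leafRemoval G S t i = true :=
  leafRemoval_mono G S (Nat.zero_le t) (by simpa [leafRemoval] using hi)

/-- The set of unremoved vertices at time `t`. -/
private def U (t : ℕ) : Finset V :=
  Finset.univ.filter (fun i => leafRemoval G S t i = false)

lemma U_subset_compl (t : ℕ) : ∀ i ∈ U G S t, i ∈ (Sᶜ : Set V) := by
  intro i hi hiS
  rw [U, Finset.mem_filter] at hi
  rw [leafRemoval_of_mem_S G S hiS] at hi
  simp at hi

lemma U_succ_subset (t : ℕ) : U G S (t + 1) ⊆ U G S t := by
  intro i hi
  rw [U, Finset.mem_filter] at hi ⊢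
  refine ⟨Finset.mem_univ _, ?_⟩
  by_contra h
  rw [Bool.not_eq_false] at h
  rw [leafRemoval_succ, h, Bool.true_or] at hi
  simp at hi

lemma U_card_decr (hac : (G.induce (Sᶜ : Set V)).IsAcyclic) (t : ℕ)
    (hne : (U G S t).Nonempty) : (U G S (t + 1)).card < (U G S t).card := by
  -- there is a vertex of `U t` with at most one unremoved neighbor
  have hleaf : ∃ i ∈ U G S t,
      ((G.neighborFinset i).filter (fun j => leafRemoval G S t j = false)).card ≤ 1 := by
    by_contra hno
    push_neg at hno
    obtain ⟨v, c, hc, hsupp⟩ := exists_cycle_of_min_degree_two hne (fun v hv => by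
      have := hno v hv
      have heq : ((G.neighborFinset v).filter (· ∈ U G S t)) =
          ((G.neighborFinset v).filter (fun j => leafRemoval G S t j = false)) := by
        apply Finset.filter_congr
        intro j _
        simp [U, Finset.mem_filter]
      rw [heq]; omega)
    exact (induce_isAcyclic_iff.mp hac) v c hc
      (fun x hx => U_subset_compl G S t x (hsupp x hx))
  obtain ⟨i, hiU, hile⟩ := hleaf
  apply Finset.card_lt_card
  refine ⟨U_succ_subset G S t, fun hsub => ?_⟩
  have : i ∈ U G S (t + 1) := hsub hiU
  rw [U, Finset.mem_filter, leafRemoval_succ] at this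
  simp only [Bool.or_eq_false_iff, decide_eq_false_iff_not] at this
  exact this.2.2 hile

lemma U_card_le (hac : (G.induce (Sᶜ : Set V)).IsAcyclic) (t : ℕ) :
    (U G S t).card ≤ Fintype.card V - t := by
  induction t with
  | zero => exact (Finset.card_filter_le _ _).trans_eq Finset.card_univ
  | succ n ih =>
    rcases Finset.eq_empty_or_nonempty (U G S n) with he | hne
    · have : U G S (n + 1) = ∅ :=
        Finset.subset_empty.mp (he ▸ U_succ_subset G S n)
      simp [this]
    · have h1 := U_card_decr G S hac n hne
      have h2 : 1 ≤ (U G S n).card := Finset.card_pos.mpr hne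
      omega

end dynamics

/-- `S` is a decycling set of `G` iff the parallel leaf-removal dynamics
started from `S` removes every vertex within `N = |V|` steps. -/
theorem decycling_iff_leafRemoval_all {V : Type*} [Fintype V] [DecidableEq V]
    (G : SimpleGraph V) [DecidableRel G.Adj] (S : Set V) [DecidablePred (· ∈ S)] :
    (G.induce (Sᶜ : Set V)).IsAcyclic ↔
      ∀ i : V, leafRemoval G S (Fintype.card V) i = true := by
  constructor
  · intro hac i
    have hle := U_card_le G S hac (Fintype.card V)
    rw [Nat.sub_self] at hle
    have hempty : U G S (Fintype.card V) = ∅ := Finset.card_eq_zero.mp (Nat.le_zero.mp hle)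
    by_contra h
    rw [Bool.not_eq_true] at h
    have : i ∈ U G S (Fintype.card V) := by
      rw [U, Finset.mem_filter]; exact ⟨Finset.mem_univ _, h⟩
    rw [hempty] at this
    simp at this
  · intro hall
    rw [induce_isAcyclic_iff]
    intro v c hc hsupp
    -- vertices on the cycle are never removed
    have hnever : ∀ t : ℕ, ∀ u ∈ c.support, leafRemoval G S t u = false := by
      intro t
      induction t with
      | zero =>
        intro u hu
        simpa [leafRemoval] using hsupp u hu
      | succ n ih =>
        intro u hu
        rw [leafRemoval_succ, ih u hu, Bool.false_or, decide_eq_false_iff_not]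
        intro hcard
        obtain ⟨a, b, hab, hua, hub, has, hbs⟩ := cycle_two_neighbors hc hu
        have hmem : ∀ x, G.Adj u x → x ∈ c.support →
            x ∈ (G.neighborFinset u).filter (fun j => leafRemoval G S n j = false) := by
          intro x hx hxs
          rw [Finset.mem_filter, SimpleGraph.mem_neighborFinset]
          exact ⟨hx, ih x hxs⟩
        have : 1 < ((G.neighborFinset u).filter
            (fun j => leafRemoval G S n j = false)).card :=
          Finset.one_lt_card.mpr ⟨a, hmem a hua has, b, hmem b hub hbs, hab⟩
        omega
    have := hnever (Fintype.card V) v c.start_mem_support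
    rw [hall v] at this
    simp at this
end
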